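/- arXiv:1706.04446 — 4 statements merged into one kernel-verified Lean document; each statement's English description precedes it below -/
import Mathlib

section
/- There do not exist four orthonormal bases of ℂ² forming a 4-fold unbiased set (4UB); more generally, for every n ≥ 4 there is no n-fold unbiased set of bases in dimension 2. -/
open scoped InnerProductSpace

open scoped Classical in
/-- The set of full cycles (`card ι`-cycles) in the permutation group of `ι`. -/
noncomputable def nCycles (ι : Type) [Fintype ι] [DecidableEq ι] : Finset (Equiv.Perm ι) :=
  Finset.univ.filter fun σ => σ.IsCycle ∧ σ.support = Finset.univ

/-- A family of `n` orthonormal bases of `ℂ^d` is `n`-fold unbiased (an `n`UB) if for every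
index tuple `x`, the sum over all `n`-cycles `σ` of the cyclic products of overlaps equals
`(n-1)!/d^(n-1)`. -/
def IsNUB {ι : Type} [Fintype ι] [DecidableEq ι] {d : ℕ}
    (B : ι → OrthonormalBasis (Fin d) ℂ (EuclideanSpace ℂ (Fin d))) : Prop :=
  ∀ x : ι → Fin d,
    (∑ σ ∈ nCycles ι, ∏ y, ⟪B y (x y), B (σ y) (x (σ y))⟫_ℂ)
      = ((Fintype.card ι - 1).factorial : ℂ) / (d : ℂ) ^ (Fintype.card ι - 1)


open Matrix
abbrev K2 := Matrix (Fin 2) (Fin 2) ℂ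

noncomputable def epsC : Fin 2 → ℂ := fun a => if a = 0 then 1 else -1

noncomputable def Emat : K2 := Matrix.diagonal epsC

lemma Emat_mul_Emat : Emat * Emat = 1 := by
  rw [Emat, Matrix.diagonal_mul_diagonal]
  have : (fun i => epsC i * epsC i) = fun _ => (1:ℂ) := by
    funext a; fin_cases a <;> simp [epsC]
  rw [this, Matrix.diagonal_one]

lemma trace_Emat : Emat.trace = 0 := by
  rw [Emat, Matrix.trace_diagonal, Fin.sum_univ_two]
  simp [epsC]

lemma Emat_conjTranspose : Ematᴴ = Emat := by
  rw [Emat, Matrix.diagonal_conjTranspose]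
  have : star epsC = epsC := by
    funext a; fin_cases a <;> simp [epsC]
  rw [this]

lemma Emat_mul_apply (X : K2) (a b : Fin 2) : (Emat * X) a b = epsC a * X a b := by
  rw [Emat, Matrix.diagonal_mul]

lemma epsC_swap (a : Fin 2) : epsC (Equiv.swap (0:Fin 2) 1 a) = -epsC a := by
  fin_cases a <;> simp [epsC, Equiv.swap_apply_left, Equiv.swap_apply_right]

lemma sum_sign {n : ℕ} (i j : Fin n) (hij : i ≠ j) :
    ∑ x : Fin n → Fin 2, epsC (x i) * epsC (x j) = 0 := by
  classical
  set Ψ : (Fin n → Fin 2) ≃ (Fin n → Fin 2) :=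
    Equiv.piCongrRight (fun y : Fin n =>
      if y = i then Equiv.swap (0:Fin 2) 1 else Equiv.refl (Fin 2)) with hΨdef
  have hΨ := Equiv.sum_comp Ψ (fun x : Fin n → Fin 2 => epsC (x i) * epsC (x j))
  have heq : ∀ x : Fin n → Fin 2,
      epsC ((Ψ x) i) * epsC ((Ψ x) j) = -(epsC (x i) * epsC (x j)) := by
    intro x
    have h1 : (Ψ x) i = Equiv.swap (0:Fin 2) 1 (x i) := by
      simp [hΨdef, Equiv.piCongrRight]
    have h2 : (Ψ x) j = x j := by
      simp [hΨdef, Equiv.piCongrRight, if_neg (Ne.symm hij)]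
    rw [h1, h2, epsC_swap]
    ring
  have h1 : (∑ x : Fin n → Fin 2, epsC (x i) * epsC (x j))
      = -∑ x : Fin n → Fin 2, epsC (x i) * epsC (x j) := by
    conv_lhs => rw [← hΨ]
    rw [Finset.sum_congr rfl (fun x _ => heq x), Finset.sum_neg_distrib]
  have h2 := eq_neg_iff_add_eq_zero.mp h1
  linear_combination h2 / 2

/-- ordered product `A 0 * A 1 * ... * A (n-1)`, right-associated. -/
noncomputable def prChain : ℕ → (ℕ → K2) → K2
  | 0, _ => 1
  | (n+1), A => A 0 * prChain n (fun k => A (k+1))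

@[simp] lemma prChain_zero (A : ℕ → K2) : prChain 0 A = 1 := rfl

lemma prChain_succ (n : ℕ) (A : ℕ → K2) :
    prChain (n+1) A = A 0 * prChain n (fun k => A (k+1)) := rfl

lemma prChain_succ_right (n : ℕ) : ∀ A : ℕ → K2, prChain (n+1) A = prChain n A * A n := by
  induction n with
  | zero => intro A; simp [prChain_succ]
  | succ m ih => intro A; rw [prChain_succ, ih, prChain_succ, mul_assoc]

lemma prChain_entry (n : ℕ) : ∀ (A : ℕ → K2) (a b : Fin 2),
    prChain n A a b = ∑ u : Fin (n+1) → Fin 2,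
      if u 0 = a ∧ u (Fin.last n) = b then (∏ k : Fin n, A k (u k.castSucc) (u k.succ)) else 0 := by
  induction n with
  | zero =>
      intro A a b
      rw [← Equiv.sum_comp (Equiv.funUnique (Fin 1) (Fin 2)).symm]
      simp only [prChain_zero, Matrix.one_apply, Finset.univ_unique, Equiv.funUnique_symm_apply,
        Finset.prod_empty]
      rw [Fin.sum_univ_two]
      fin_cases a <;> fin_cases b <;> simp
  | succ m ih =>
      intro A a b
      rw [prChain_succ, Matrix.mul_apply]
      rw [← Equiv.sum_comp (Fin.consEquiv (fun _ : Fin (m+2) => Fin 2))]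
      rw [Fintype.sum_prod_type]
      have key : ∀ (c : Fin 2) (w : Fin (m+1) → Fin 2),
          (if (Fin.consEquiv (fun _ : Fin (m+2) => Fin 2)) (c, w) 0 = a ∧
              (Fin.consEquiv (fun _ : Fin (m+2) => Fin 2)) (c, w) (Fin.last (m+1)) = b then
            (∏ k : Fin (m+1), A k ((Fin.consEquiv (fun _ : Fin (m+2) => Fin 2)) (c, w) k.castSucc)
              ((Fin.consEquiv (fun _ : Fin (m+2) => Fin 2)) (c, w) k.succ)) else 0)
          = (if c = a ∧ w (Fin.last m) = b then
              A 0 c (w 0) * ∏ i : Fin m, A (↑i+1) (w i.castSucc) (w i.succ) else 0) := by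
        intro c w
        have h1 : (Fin.consEquiv (fun _ : Fin (m+2) => Fin 2)) (c, w) = Fin.cons c w := rfl
        rw [h1, Fin.cons_zero, ← Fin.succ_last, Fin.cons_succ]
        congr 1
        rw [Fin.prod_univ_succ]
        simp only [Fin.castSucc_zero, Fin.cons_zero, Fin.val_zero, Fin.val_succ,
          ← Fin.succ_castSucc, Fin.cons_succ]
      simp only [key]
      trans ∑ w : Fin (m+1) → Fin 2, if w (Fin.last m) = b then
          A 0 a (w 0) * ∏ i : Fin m, A (↑i+1) (w i.castSucc) (w i.succ) else 0
      · simp only [ih, Finset.mul_sum]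
        rw [Finset.sum_comm]
        refine Finset.sum_congr rfl fun w _ => ?_
        simp only [ite_and, mul_ite, mul_zero]
        rw [Finset.sum_ite_eq]
        simp
      · rw [Finset.sum_comm]
        refine Finset.sum_congr rfl fun w _ => ?_
        simp only [ite_and]
        rw [Finset.sum_ite_eq']
        simp

lemma snoc_wrap (N : ℕ) (u : Fin (N+1) → Fin 2) (k : Fin (N+1)) :
    (Fin.snoc u (u 0) : Fin (N+2) → Fin 2) k.succ = u (k + 1) := by
  by_cases hk : k = Fin.last N
  · subst hk
    rw [Fin.succ_last, Fin.snoc_last, Fin.last_add_one]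
  · have hv : (k + 1).val = k.val + 1 := by
      rw [Fin.val_add_one]; simp [hk]
    have : k.succ = (k + 1).castSucc := by
      apply Fin.ext; simp [hv]
    rw [this, Fin.snoc_castSucc]

lemma prChain_trace (N : ℕ) (A : ℕ → K2) :
    ∑ u : Fin (N+1) → Fin 2, ∏ k : Fin (N+1), A k (u k) (u (k+1))
      = (prChain (N+1) A).trace := by
  rw [Matrix.trace]
  simp only [Matrix.diag, prChain_entry (N+1) A]
  rw [Finset.sum_comm]
  have step1 : ∀ v : Fin (N+2) → Fin 2,
      (∑ a : Fin 2, if v 0 = a ∧ v (Fin.last (N+1)) = a then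
        (∏ k : Fin (N+1), A k (v k.castSucc) (v k.succ)) else 0)
      = (if v (Fin.last (N+1)) = v 0 then
        (∏ k : Fin (N+1), A k (v k.castSucc) (v k.succ)) else 0) := by
    intro v
    simp only [ite_and]
    rw [Finset.sum_ite_eq]
    simp
  simp only [step1]
  rw [← Equiv.sum_comp (Fin.snocEquiv (fun _ : Fin (N+2) => Fin 2))]
  rw [Fintype.sum_prod_type]
  have h0 : ∀ (c : Fin 2) (u : Fin (N+1) → Fin 2),
      (Fin.snocEquiv (fun _ : Fin (N+2) => Fin 2)) (c, u) = Fin.snoc u c := by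
    intro c u; rfl
  simp only [h0]
  rw [Finset.sum_comm]
  refine Finset.sum_congr rfl fun u _ => ?_
  have hsl : ∀ c : Fin 2, (Fin.snoc u c : Fin (N+2) → Fin 2) (Fin.last (N+1)) = c := by
    intro c; rw [Fin.snoc_last]
  have hs0 : ∀ c : Fin 2, (Fin.snoc u c : Fin (N+2) → Fin 2) 0 = u 0 := by
    intro c
    have : (0 : Fin (N+2)) = Fin.castSucc 0 := rfl
    rw [this, Fin.snoc_castSucc]
  simp only [hsl, hs0]
  rw [Finset.sum_ite_eq']
  simp only [Finset.mem_univ, if_true]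
  refine Finset.prod_congr rfl fun k _ => ?_
  rw [Fin.snoc_castSucc, snoc_wrap]

lemma prChain_trace' (n : ℕ) [NeZero n] (hn : 0 < n) (A : ℕ → K2) :
    ∑ u : Fin n → Fin 2, ∏ k : Fin n, A k (u k) (u (k + 1))
      = (prChain n A).trace := by
  obtain ⟨N, rfl⟩ : ∃ N, n = N + 1 := ⟨n - 1, by omega⟩
  exact prChain_trace N A

noncomputable def Mmat {n : ℕ} (B : Fin n → OrthonormalBasis (Fin 2) ℂ (EuclideanSpace ℂ (Fin 2)))
    (y z : Fin n) : K2 := Matrix.of fun a b => ⟪B y a, B z b⟫_ℂ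

lemma Mmat_apply {n : ℕ} (B : Fin n → OrthonormalBasis (Fin 2) ℂ (EuclideanSpace ℂ (Fin 2)))
    (y z : Fin n) (a b : Fin 2) : Mmat B y z a b = ⟪B y a, B z b⟫_ℂ := rfl

lemma Mmat_self {n : ℕ} (B : Fin n → OrthonormalBasis (Fin 2) ℂ (EuclideanSpace ℂ (Fin 2)))
    (y : Fin n) : Mmat B y y = 1 := by
  ext a b
  rw [Mmat_apply, Matrix.one_apply]
  rw [orthonormal_iff_ite.mp (B y).orthonormal a b]

lemma Mmat_mul {n : ℕ} (B : Fin n → OrthonormalBasis (Fin 2) ℂ (EuclideanSpace ℂ (Fin 2)))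
    (y z w : Fin n) : Mmat B y z * Mmat B z w = Mmat B y w := by
  ext a c
  rw [Matrix.mul_apply, Mmat_apply]
  simp only [Mmat_apply]
  exact (B z).sum_inner_mul_inner _ _

lemma Mmat_conjTranspose {n : ℕ}
    (B : Fin n → OrthonormalBasis (Fin 2) ℂ (EuclideanSpace ℂ (Fin 2)))
    (y z : Fin n) : (Mmat B y z)ᴴ = Mmat B z y := by
  ext a b
  rw [Matrix.conjTranspose_apply, Mmat_apply, Mmat_apply]
  exact inner_conj_symm _ _

lemma percycle {n : ℕ} (hn : 4 ≤ n)
    (B : Fin n → OrthonormalBasis (Fin 2) ℂ (EuclideanSpace ℂ (Fin 2)))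
    (σ : Equiv.Perm (Fin n)) (hc : σ.IsCycle) (hs : σ.support = Finset.univ)
    (i j : Fin n) (hij : i ≠ j) :
    ∑ x : Fin n → Fin 2, epsC (x i) * epsC (x j) *
        ∏ y, ⟪B y (x y), B (σ y) (x (σ y))⟫_ℂ
      = (Emat * Mmat B i j * Emat * Mmat B j i).trace := by
  have hnpos : 0 < n := by omega
  haveI : NeZero n := ⟨by omega⟩
  have hord : orderOf σ = n := by
    rw [hc.orderOf, hs, Finset.card_univ, Fintype.card_fin]
  set e : ℕ → Fin n := fun k => (σ ^ k) i with he
  have hwrap : ∀ k, e (k % n) = e k := by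
    intro k
    have h2 : σ ^ (k % n) = σ ^ k := by
      conv_rhs => rw [← pow_mod_orderOf]
      rw [hord]
    simp only [he, h2]
  have hstep : ∀ k, σ (e k) = e (k + 1) := by
    intro k
    show σ ((σ ^ k) i) = (σ ^ (k + 1)) i
    have h2 : σ ^ (k + 1) = σ * σ ^ k := pow_succ' σ k
    rw [h2]
    rfl
  have he0 : e 0 = i := by simp [he]
  have hen : e n = i := by
    have h2 : σ ^ n = 1 := by
      have h3 : σ ^ n = σ ^ orderOf σ := by rw [hord]
      rw [h3, pow_orderOf_eq_one]
    simp only [he, h2]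
    rfl
  have hmem : ∀ b : Fin n, σ b ≠ b := by
    intro b
    have : b ∈ σ.support := by rw [hs]; exact Finset.mem_univ b
    exact Equiv.Perm.mem_support.mp this
  have hsurj : Function.Surjective (fun k : Fin n => e k.val) := by
    intro b
    obtain ⟨k, hk⟩ := hc.exists_pow_eq (hmem i) (hmem b)
    refine ⟨⟨k % n, Nat.mod_lt _ hnpos⟩, ?_⟩
    show e (k % n) = b
    rw [hwrap k]; exact hk
  have hbij : Function.Bijective (fun k : Fin n => e k.val) :=
    Finite.surjective_iff_bijective.mp hsurj
  set E0 : Fin n ≃ Fin n := Equiv.ofBijective _ hbij with hE0def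
  have hE0 : ∀ k : Fin n, E0 k = e k.val := fun _ => rfl
  set mf : Fin n := E0.symm j with hmf
  have hem : e mf.val = j := by
    have h2 := E0.apply_symm_apply j
    rwa [hE0] at h2
  have hsymm_i : E0.symm i = 0 := by
    rw [Equiv.symm_apply_eq, hE0]
    show i = e ((0 : Fin n) : ℕ)
    rw [Fin.val_zero, he0]
  have hmf0 : mf ≠ 0 := by
    intro h
    apply hij
    rw [← he0, ← hem, h]
    rfl
  set m := mf.val with hmdef
  have hm0 : m ≠ 0 := fun h => hmf0 (Fin.ext h)
  have hmn : m < n := mf.isLt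
  obtain ⟨D, hD0, hDm, hDo⟩ : ∃ D : ℕ → K2,
      D 0 = Emat ∧ D m = Emat ∧ ∀ t, t ≠ 0 → t ≠ m → D t = 1 :=
    ⟨fun t => if t = 0 ∨ t = m then Emat else 1, by simp, by simp,
      fun t h1 h2 => by simp [h1, h2]⟩
  set A : ℕ → K2 := fun t => D t * Mmat B (e t) (e (t + 1)) with hA
  have hadd : ∀ k : Fin n, ((k + 1 : Fin n) : ℕ) = (k.val + 1) % n := by
    intro k; rw [Fin.add_def]; simp
  -- Step A: reindex the sum and the product along the cycle
  have key1 : ∑ x : Fin n → Fin 2, epsC (x i) * epsC (x j) *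
        ∏ y, ⟪B y (x y), B (σ y) (x (σ y))⟫_ℂ
      = ∑ u : Fin n → Fin 2, epsC (u 0) * epsC (u mf) *
        ∏ k : Fin n, Mmat B (e k.val) (e (k.val + 1)) (u k) (u (k + 1)) := by
    rw [← Equiv.sum_comp (Equiv.arrowCongr E0 (Equiv.refl (Fin 2)))]
    refine Finset.sum_congr rfl fun u _ => ?_
    have hx : ∀ y, (Equiv.arrowCongr E0 (Equiv.refl (Fin 2))) u y = u (E0.symm y) := by
      intro y; rfl
    simp only [hx, hsymm_i, ← hmf]
    congr 1
    rw [← Equiv.prod_comp E0]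
    refine Finset.prod_congr rfl fun k _ => ?_
    have h1 : σ (E0 k) = E0 (k + 1) := by
      rw [hE0, hE0, hstep, hadd, hwrap]
    have h2 : E0 (k + 1) = e (k.val + 1) := by
      rw [hE0, hadd, hwrap]
    rw [h1, Equiv.symm_apply_apply, Equiv.symm_apply_apply, Mmat_apply, hE0, h2]
  -- Step B: fold the sign weights into the matrices
  have key2 : ∀ u : Fin n → Fin 2, epsC (u 0) * epsC (u mf) *
        ∏ k : Fin n, Mmat B (e k.val) (e (k.val + 1)) (u k) (u (k + 1))
      = ∏ k : Fin n, A k.val (u k) (u (k + 1)) := by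
    intro u
    have hsplit : ∀ k : Fin n, A k.val (u k) (u (k + 1))
        = (if k = 0 then epsC (u k) else 1) * ((if k = mf then epsC (u k) else 1) *
            Mmat B (e k.val) (e (k.val + 1)) (u k) (u (k + 1))) := by
      intro k
      by_cases h0 : k = 0
      · subst h0
        rw [if_pos rfl, if_neg (Ne.symm hmf0), one_mul]
        simp only [hA, Fin.val_zero, hD0, Emat_mul_apply]
      · by_cases h1 : k = mf
        · subst h1
          rw [if_neg h0, if_pos rfl]
          simp only [hA]
          rw [show D (mf : ℕ) = Emat from hDm, Emat_mul_apply, one_mul]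
        · rw [if_neg h0, if_neg h1, one_mul]
          have hkv0 : (k : ℕ) ≠ 0 := fun h => h0 (Fin.ext h)
          have hkvm : (k : ℕ) ≠ m := fun h => h1 (Fin.ext h)
          simp only [hA]
          rw [hDo _ hkv0 hkvm, one_mul, one_mul]
    simp only [hsplit]
    rw [Finset.prod_mul_distrib, Finset.prod_mul_distrib,
      Finset.prod_ite_eq' Finset.univ (0 : Fin n) (fun k => epsC (u k)),
      Finset.prod_ite_eq' Finset.univ mf (fun k => epsC (u k))]
    simp only [Finset.mem_univ, if_true]
    ring
  -- Step C and D: trace and telescoping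
  rw [key1]
  rw [Finset.sum_congr rfl fun u _ => key2 u]
  rw [prChain_trace' n hnpos A]
  congr 1
  -- telescoping
  have tel1 : ∀ k, k + 1 ≤ m → prChain (k + 1) A = Emat * Mmat B i (e (k + 1)) := by
    intro k
    induction k with
    | zero =>
        intro _
        rw [prChain_succ_right, prChain_zero, one_mul]
        simp only [hA]
        rw [hD0, he0]
    | succ p ih =>
        intro hp
        rw [prChain_succ_right, ih (by omega)]
        simp only [hA]
        rw [hDo (p+1) (by omega) (by omega), one_mul, mul_assoc, Mmat_mul]
  have tel2 : ∀ d, m + d + 1 ≤ n →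
      prChain (m + d + 1) A = Emat * Mmat B i j * Emat * Mmat B j (e (m + d + 1)) := by
    intro d
    induction d with
    | zero =>
        intro _
        have hm1 : m = (m - 1) + 1 := by omega
        have hPm : prChain m A = Emat * Mmat B i (e m) := by
          conv_lhs => rw [hm1]
          rw [tel1 (m - 1) (by omega), ← hm1]
        rw [show m + 0 + 1 = m + 1 by ring, prChain_succ_right, hPm]
        simp only [hA]
        rw [hDm, hem, ← mul_assoc]
    | succ p ih =>
        intro hp
        rw [show m + (p + 1) + 1 = (m + p + 1) + 1 by ring, prChain_succ_right,
          ih (by omega)]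
        simp only [hA]
        rw [hDo (m+p+1) (by omega) (by omega), one_mul, mul_assoc, Mmat_mul]
  have : prChain n A = Emat * Mmat B i j * Emat * Mmat B j i := by
    have h2 : n = m + (n - m - 1) + 1 := by omega
    conv_lhs => rw [h2]
    rw [tel2 (n - m - 1) (by omega), ← h2, hen]
  rw [this]



lemma trace_mul_herm (Q R : K2) (hQ : Qᴴ = Q) (hR : Rᴴ = R)
    (hQt : Q.trace = 0) (hRt : R.trace = 0) :
    (Q * R).trace = 2 * (((Q 0 0).re * (R 0 0).re + (Q 0 1).re * (R 0 1).re
      + (Q 0 1).im * (R 0 1).im) : ℝ) := by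
  have hQ10 : Q 1 0 = (starRingEnd ℂ) (Q 0 1) := by
    conv_lhs => rw [← hQ]
    rfl
  have hR10 : R 1 0 = (starRingEnd ℂ) (R 0 1) := by
    conv_lhs => rw [← hR]
    rfl
  have hQ00 : (Q 0 0).im = 0 := by
    have : Q 0 0 = (starRingEnd ℂ) (Q 0 0) := by
      conv_lhs => rw [← hQ]
      rfl
    have := congrArg Complex.im this
    simp at this
    linarith [this]
  have hR00 : (R 0 0).im = 0 := by
    have : R 0 0 = (starRingEnd ℂ) (R 0 0) := by
      conv_lhs => rw [← hR]
      rfl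
    have := congrArg Complex.im this
    simp at this
    linarith [this]
  have hQ11 : Q 1 1 = -Q 0 0 := by
    rw [Matrix.trace_fin_two] at hQt
    linear_combination hQt
  have hR11 : R 1 1 = -R 0 0 := by
    rw [Matrix.trace_fin_two] at hRt
    linear_combination hRt
  rw [Matrix.trace_fin_two]
  rw [Matrix.mul_apply, Matrix.mul_apply, Fin.sum_univ_two, Fin.sum_univ_two]
  rw [hQ10, hR10, hQ11, hR11]
  apply Complex.ext <;>
    simp [Complex.add_re, Complex.mul_re, Complex.mul_im, hQ00, hR00] <;> ring

open scoped RealInnerProductSpace in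
lemma no_four_herm (Q : Fin 4 → K2) (hH : ∀ a, (Q a)ᴴ = Q a) (ht : ∀ a, (Q a).trace = 0)
    (htr : ∀ a b, (Q a * Q b).trace = if a = b then 2 else 0) : False := by
  set v : Fin 4 → EuclideanSpace ℝ (Fin 3) := fun a =>
    (WithLp.equiv 2 (Fin 3 → ℝ)).symm ![(Q a 0 0).re, (Q a 0 1).re, (Q a 0 1).im] with hv
  have hinner : ∀ a b, ⟪v a, v b⟫ = if a = b then (1:ℝ) else 0 := by
    intro a b
    have h2 := trace_mul_herm (Q a) (Q b) (hH a) (hH b) (ht a) (ht b)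
    rw [htr a b] at h2
    have h3 : ⟪v a, v b⟫ = (Q a 0 0).re * (Q b 0 0).re + (Q a 0 1).re * (Q b 0 1).re
        + (Q a 0 1).im * (Q b 0 1).im := by
      simp [hv, PiLp.inner_apply, RCLike.inner_apply, Fin.sum_univ_three]
      ring
    rw [h3]
    by_cases hab : a = b
    · rw [if_pos hab] at h2 ⊢
      have h4 : (2:ℝ) * ((Q a 0 0).re * (Q b 0 0).re + (Q a 0 1).re * (Q b 0 1).re
          + (Q a 0 1).im * (Q b 0 1).im) = 2 := by exact_mod_cast h2.symm
      linarith
    · rw [if_neg hab] at h2 ⊢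
      have h4 : (2:ℝ) * ((Q a 0 0).re * (Q b 0 0).re + (Q a 0 1).re * (Q b 0 1).re
          + (Q a 0 1).im * (Q b 0 1).im) = 0 := by exact_mod_cast h2.symm
      linarith
  have horth : Orthonormal ℝ v := orthonormal_iff_ite.mpr hinner
  have hcard := horth.linearIndependent.fintype_card_le_finrank
  rw [finrank_euclideanSpace_fin] at hcard
  simp at hcard



/-- For every `n ≥ 4` there is no `n`-fold unbiased set of orthonormal bases in dimension 2;
in particular no four orthonormal bases of `ℂ²` form a 4UB. -/
theorem stmt_11 (n : ℕ) (hn : 4 ≤ n)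
    (B : Fin n → OrthonormalBasis (Fin 2) ℂ (EuclideanSpace ℂ (Fin 2))) :
    ¬ IsNUB B := by
  intro h
  haveI : NeZero n := ⟨by omega⟩
  have hrot : finRotate n ∈ nCycles (Fin n) := by
    simp only [nCycles, Finset.mem_filter, Finset.mem_univ, true_and]
    exact ⟨isCycle_finRotate_of_le (by omega), support_finRotate_of_le (by omega)⟩
  have hcard : (((nCycles (Fin n)).card : ℂ)) ≠ 0 :=
    Nat.cast_ne_zero.mpr (Finset.card_ne_zero.mpr ⟨finRotate n, hrot⟩)
  have hT : ∀ i j : Fin n, i ≠ j →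
      (Emat * Mmat B i j * Emat * Mmat B j i).trace = 0 := by
    intro i j hij
    obtain ⟨c, hc⟩ : ∃ c : ℂ, ∀ x : Fin n → Fin 2,
        (∑ σ ∈ nCycles (Fin n), ∏ y, ⟪B y (x y), B (σ y) (x (σ y))⟫_ℂ) = c := ⟨_, h⟩
    have hS1 : ∑ x : Fin n → Fin 2, epsC (x i) * epsC (x j) *
        (∑ σ ∈ nCycles (Fin n), ∏ y, ⟪B y (x y), B (σ y) (x (σ y))⟫_ℂ) = 0 := by
      calc ∑ x : Fin n → Fin 2, epsC (x i) * epsC (x j) *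
            (∑ σ ∈ nCycles (Fin n), ∏ y, ⟪B y (x y), B (σ y) (x (σ y))⟫_ℂ)
          = ∑ x : Fin n → Fin 2, epsC (x i) * epsC (x j) * c :=
            Finset.sum_congr rfl fun x _ => by rw [hc x]
        _ = (∑ x : Fin n → Fin 2, epsC (x i) * epsC (x j)) * c := by
            rw [← Finset.sum_mul]
        _ = 0 := by rw [sum_sign i j hij, zero_mul]
    have hS2 : ∑ x : Fin n → Fin 2, epsC (x i) * epsC (x j) *
        (∑ σ ∈ nCycles (Fin n), ∏ y, ⟪B y (x y), B (σ y) (x (σ y))⟫_ℂ)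
        = ∑ σ ∈ nCycles (Fin n), ∑ x : Fin n → Fin 2, epsC (x i) * epsC (x j) *
            ∏ y, ⟪B y (x y), B (σ y) (x (σ y))⟫_ℂ := by
      simp only [Finset.mul_sum]
      exact Finset.sum_comm
    rw [hS2] at hS1
    have hS3 : ∀ σ ∈ nCycles (Fin n),
        (∑ x : Fin n → Fin 2, epsC (x i) * epsC (x j) *
          ∏ y, ⟪B y (x y), B (σ y) (x (σ y))⟫_ℂ)
        = (Emat * Mmat B i j * Emat * Mmat B j i).trace := by
      intro σ hσ
      simp only [nCycles, Finset.mem_filter] at hσ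
      exact percycle hn B σ hσ.2.1 hσ.2.2 i j hij
    rw [Finset.sum_congr rfl hS3, Finset.sum_const, nsmul_eq_mul] at hS1
    rcases mul_eq_zero.mp hS1 with h' | h'
    · exact absurd h' hcard
    · exact h'
  have hT' : ∀ i j : Fin n, i ≠ j →
      (Emat * (Mmat B i j * (Emat * Mmat B j i))).trace = 0 := by
    intro i j hij
    rw [← mul_assoc, ← mul_assoc]
    exact hT i j hij
  -- build four traceless Hermitian matrices with orthonormality relations
  set z : Fin n := ⟨0, by omega⟩ with hz
  set g : Fin 4 → Fin n := Fin.castLE hn with hg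
  have hginj : Function.Injective g := Fin.castLE_injective hn
  set Q : Fin 4 → K2 := fun a => Mmat B z (g a) * Emat * Mmat B (g a) z with hQ
  have hMM : ∀ (y w v : Fin n) (X : K2),
      Mmat B y w * (Mmat B w v * X) = Mmat B y v * X := by
    intro y w v X; rw [← mul_assoc, Mmat_mul]
  have hMM1 : ∀ (y w : Fin n) (X : K2), Mmat B y w * (Mmat B w y * X) = X := by
    intro y w X; rw [← mul_assoc, Mmat_mul, Mmat_self, one_mul]
  have hEE : ∀ X : K2, Emat * (Emat * X) = X := by
    intro X; rw [← mul_assoc, Emat_mul_Emat, one_mul]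
  have hH : ∀ a, (Q a)ᴴ = Q a := by
    intro a
    simp only [hQ]
    rw [Matrix.conjTranspose_mul, Matrix.conjTranspose_mul, Mmat_conjTranspose,
      Mmat_conjTranspose, Emat_conjTranspose, ← mul_assoc]
  have ht : ∀ a, (Q a).trace = 0 := by
    intro a
    simp only [hQ]
    rw [Matrix.trace_mul_comm, ← mul_assoc, Mmat_mul, Mmat_self, one_mul, trace_Emat]
  have htr : ∀ a b, (Q a * Q b).trace = if a = b then 2 else 0 := by
    intro a b
    by_cases hab : a = b
    · subst hab
      rw [if_pos rfl]
      simp only [hQ, mul_assoc]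
      rw [hMM1, hEE, Mmat_mul, Mmat_self, Matrix.trace_one]
      simp
    · rw [if_neg hab]
      have hij' : g a ≠ g b := fun hcon => hab (hginj hcon)
      simp only [hQ, mul_assoc]
      rw [hMM]
      rw [Matrix.trace_mul_comm]
      simp only [mul_assoc]
      rw [Mmat_mul]
      exact hT' (g a) (g b) hij'
  exact no_four_herm Q hH ht htr
end

section
/- There do not exist three orthonormal bases of ℂ³ forming a 3-fold unbiased set (3UB); consequently there are no n-fold unbiased sets in dimension 3 for any n ≥ 3. -/
open scoped InnerProductSpace

open Equiv Equiv.Perm Finset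

lemma mem_nCycles {ι : Type} [Fintype ι] [DecidableEq ι] (σ : Equiv.Perm ι) :
    σ ∈ nCycles ι ↔ σ.IsCycle ∧ σ.support = Finset.univ := by
  classical
  simp [nCycles]
lemma support_eq_univ_iff {ι : Type} [Fintype ι] [DecidableEq ι] (σ : Equiv.Perm ι) :
    σ.support = Finset.univ ↔ ∀ x, σ x ≠ x := by
  simp [Finset.eq_univ_iff_forall]
lemma fullCycle_isCycleOn {ι : Type} [Fintype ι] [DecidableEq ι] {f : Equiv.Perm ι}
    (h1 : f.IsCycle) (h2 : ∀ x, f x ≠ x) :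
    f.IsCycleOn (↑(Finset.univ : Finset ι)) := by
  have := h1.isCycleOn
  have hs : {x | f x ≠ x} = (↑(Finset.univ : Finset ι) : Set ι) := by
    ext x; simp [h2 x]
  rwa [hs] at this
lemma orbit_formula {n : ℕ} (p' : Fin n) (e : Equiv.Perm (Fin n)) :
    ∀ k : ℕ, (∀ j, 1 ≤ j → j ≤ k → (e ^ j) p' ≠ p') →
    ((Equiv.Perm.decomposeFin.symm (p'.succ, e)) ^ (k + 1)) 0 = ((e ^ k) p').succ := by
  intro k
  induction k with
  | zero => intro _; simp
  | succ k ih =>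
    intro h
    have h1 : ((Equiv.Perm.decomposeFin.symm (p'.succ, e)) ^ (k + 1)) 0 = ((e ^ k) p').succ :=
      ih fun j hj1 hj2 => h j hj1 (hj2.trans (Nat.le_succ k))
    have h2 : (e ^ (k + 1)) p' ≠ p' := h (k + 1) (by omega) le_rfl
    rw [pow_succ', Equiv.Perm.mul_apply, h1, Equiv.Perm.decomposeFin_symm_apply_succ]
    have he : e ((e ^ k) p') = (e ^ (k + 1)) p' := by
      rw [pow_succ', Equiv.Perm.mul_apply]
    rw [he, Equiv.swap_apply_of_ne_of_ne (Fin.succ_ne_zero _)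
      (fun hc => h2 (Fin.succ_injective _ hc))]


lemma no_fixed {n : ℕ} (hn : 2 ≤ n) (p' : Fin n) (e : Equiv.Perm (Fin n))
    (hc : (Equiv.Perm.decomposeFin.symm (p'.succ, e)).IsCycle)
    (hs : ∀ y : Fin (n + 1), Equiv.Perm.decomposeFin.symm (p'.succ, e) y ≠ y) :
    ∀ z : Fin n, e z ≠ z := by
  intro z hz
  have hp : (p'.succ : Fin (n + 1)) ≠ 0 := Fin.succ_ne_zero p'
  have h1 := hs z.succ
  rw [Equiv.Perm.decomposeFin_symm_apply_succ, hz] at h1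
  by_cases hzp : z = p'
  · rw [hzp] at hz
    have hσ0 : Equiv.Perm.decomposeFin.symm (p'.succ, e) 0 = p'.succ :=
      Equiv.Perm.decomposeFin_symm_apply_zero _ _
    have hσp : Equiv.Perm.decomposeFin.symm (p'.succ, e) p'.succ = 0 := by
      rw [Equiv.Perm.decomposeFin_symm_apply_succ, hz, Equiv.swap_apply_right]
    have hfx : Equiv.Perm.decomposeFin.symm (p'.succ, e) 0 ≠ 0 := by
      rw [hσ0]; exact hp
    have hffx : Equiv.Perm.decomposeFin.symm (p'.succ, e)
        (Equiv.Perm.decomposeFin.symm (p'.succ, e) 0) = 0 := by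
      rw [hσ0, hσp]
    have heq : Equiv.Perm.decomposeFin.symm (p'.succ, e) = Equiv.swap 0 p'.succ := by
      have := hc.eq_swap_of_apply_apply_eq_self hfx hffx
      rwa [hσ0] at this
    have hcard : (Equiv.Perm.decomposeFin.symm (p'.succ, e)).support.card = n + 1 := by
      rw [(support_eq_univ_iff _).2 hs]; simp
    rw [heq, Equiv.Perm.card_support_swap hp.symm] at hcard
    omega
  · have h2 : Equiv.swap 0 p'.succ z.succ = z.succ :=
      Equiv.swap_apply_of_ne_of_ne (Fin.succ_ne_zero _)
        (fun hc' => hzp (Fin.succ_injective _ hc'))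
    exact h1 h2

lemma insert_mem {n : ℕ} (hn : 2 ≤ n) (p : Fin (n + 1)) (e : Equiv.Perm (Fin n)) :
    Equiv.Perm.decomposeFin.symm (p, e) ∈ nCycles (Fin (n + 1)) ↔
      p ≠ 0 ∧ e ∈ nCycles (Fin n) := by
  rw [mem_nCycles, mem_nCycles]
  constructor
  · rintro ⟨hc, hs⟩
    rw [support_eq_univ_iff] at hs
    have hp : p ≠ 0 := by
      have := hs 0
      rwa [Equiv.Perm.decomposeFin_symm_apply_zero] at this
    obtain ⟨p', rfl⟩ := Fin.exists_succ_eq.2 hp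
    have hse : ∀ z : Fin n, e z ≠ z := no_fixed hn p' e hc hs
    refine ⟨hp, ?_, (support_eq_univ_iff _).2 hse⟩
    -- e is a cycle
    have hK : ∃ K : ℕ, 0 < K ∧ (e ^ K) p' = p' := by
      refine ⟨orderOf e, orderOf_pos e, ?_⟩
      rw [pow_orderOf_eq_one]; rfl
    classical
    obtain ⟨K, hKspec, hKmin'⟩ :
        ∃ K, (0 < K ∧ (e ^ K) p' = p') ∧ ∀ j < K, ¬(0 < j ∧ (e ^ j) p' = p') :=
      ⟨Nat.find hK, Nat.find_spec hK, fun j => Nat.find_min hK⟩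
    obtain ⟨hKpos, hKfix⟩ := hKspec
    have hKmin : ∀ j, 1 ≤ j → j < K → (e ^ j) p' ≠ p' := fun j hj1 hj2 hj3 =>
      hKmin' j hj2 ⟨hj1, hj3⟩
    have key : ∀ i j : ℕ, i < j → j < K → (e ^ i) p' = (e ^ j) p' → False := by
      intro i j hij hjK hEq
      have h1 : (e ^ j) p' = (e ^ (j - i)) ((e ^ i) p') := by
        rw [← Equiv.Perm.mul_apply, ← pow_add]
        congr 2
        omega
      rw [← hEq] at h1
      have h2 : (e ^ (j - i)) ((e ^ i) p') = (e ^ i) ((e ^ (j - i)) p') := by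
        rw [← Equiv.Perm.mul_apply, ← Equiv.Perm.mul_apply, ← pow_add, ← pow_add, Nat.add_comm]
      rw [h2] at h1
      exact hKmin (j - i) (by omega) (by omega) (Equiv.injective _ h1.symm)
    have hinj : Function.Injective (fun i : Fin K => (e ^ (i : ℕ)) p') := by
      intro i j hij
      rcases lt_trichotomy (i : ℕ) (j : ℕ) with h | h | h
      · exact absurd hij (fun hc' => key _ _ h j.2 hc')
      · exact Fin.ext h
      · exact absurd hij.symm (fun hc' => key _ _ h i.2 hc')
    have hKle : K ≤ n := by
      have := Fintype.card_le_of_injective _ hinj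
      simpa using this
    have hσK : ((Equiv.Perm.decomposeFin.symm (p'.succ, e)) ^ (K + 1)) 0 = 0 := by
      obtain ⟨K', rfl⟩ : ∃ K', K = K' + 1 := ⟨K - 1, by omega⟩
      have hform := orbit_formula p' e K' (fun j hj1 hj2 => hKmin j hj1 (by omega))
      rw [pow_succ', Equiv.Perm.mul_apply, hform, Equiv.Perm.decomposeFin_symm_apply_succ]
      have he : e ((e ^ K') p') = p' := by
        rw [← Equiv.Perm.mul_apply, ← pow_succ']
        exact hKfix
      rw [he, Equiv.swap_apply_right]
    have hdvd : (n + 1) ∣ (K + 1) := by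
      have hcyc := fullCycle_isCycleOn hc hs
      have := (hcyc.pow_apply_eq (Finset.mem_univ 0)).1 hσK
      simpa using this
    have hKn : K = n := by
      have := Nat.le_of_dvd (by omega) hdvd
      omega
    have hsurj : Function.Surjective (fun i : Fin K => (e ^ (i : ℕ)) p') := by
      have hbij : Function.Bijective (fun i : Fin K => (e ^ (i : ℕ)) p') := by
        rw [Fintype.bijective_iff_injective_and_card]
        exact ⟨hinj, by simp [hKn]⟩
      exact hbij.2
    refine ⟨p', hse p', ?_⟩
    intro y _
    obtain ⟨i, hi⟩ := hsurj y
    exact ⟨((i : ℕ) : ℤ), by rw [zpow_natCast]; exact hi⟩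
  · rintro ⟨hp, hce, hse⟩
    rw [support_eq_univ_iff] at hse
    obtain ⟨p', rfl⟩ := Fin.exists_succ_eq.2 hp
    have hnofix : ∀ y : Fin (n + 1), Equiv.Perm.decomposeFin.symm (p'.succ, e) y ≠ y := by
      intro y
      refine Fin.cases ?_ ?_ y
      · rw [Equiv.Perm.decomposeFin_symm_apply_zero]
        exact hp
      · intro z
        rw [Equiv.Perm.decomposeFin_symm_apply_succ]
        by_cases hzp : e z = p'
        · rw [hzp, Equiv.swap_apply_right]
          exact (Fin.succ_ne_zero z).symm
        · rw [Equiv.swap_apply_of_ne_of_ne (Fin.succ_ne_zero _)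
            (fun hc' => hzp (Fin.succ_injective _ hc'))]
          exact fun hc' => hse z (Fin.succ_injective _ hc')
    constructor
    · refine ⟨0, hnofix 0, ?_⟩
      intro y _
      refine Fin.cases ?_ ?_ y
      · exact Equiv.Perm.SameCycle.refl _ _
      · intro z
        have hcyc := fullCycle_isCycleOn hce hse
        obtain ⟨k, hk, hke⟩ := hcyc.exists_pow_eq (Finset.mem_univ p') (Finset.mem_univ z)
        have hkn : k < n := by simpa using hk
        have hform := orbit_formula p' e k (fun j hj1 hj2 hfix => by
          have hd := (hcyc.pow_apply_eq (Finset.mem_univ p')).1 hfix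
          simp only [Finset.card_univ, Fintype.card_fin] at hd
          have := Nat.le_of_dvd (by omega) hd
          omega)
        exact ⟨((k + 1 : ℕ) : ℤ), by rw [zpow_natCast, hform, hke]⟩
    · rw [support_eq_univ_iff]
      exact hnofix
open scoped InnerProductSpace

lemma collapse {n : ℕ} (B : Fin (n + 1) → OrthonormalBasis (Fin 3) ℂ (EuclideanSpace ℂ (Fin 3)))
    (x : Fin n → Fin 3) (p' : Fin n) (e : Equiv.Perm (Fin n)) :
    (∑ j : Fin 3, ∏ y : Fin (n + 1),
        ⟪B y ((Fin.cases j x : ∀ _ : Fin (n+1), Fin 3) y),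
          B ((Equiv.Perm.decomposeFin.symm (p'.succ, e)) y)
            ((Fin.cases j x : ∀ _ : Fin (n+1), Fin 3)
              ((Equiv.Perm.decomposeFin.symm (p'.succ, e)) y))⟫_ℂ)
      = ∏ z : Fin n, ⟪B z.succ (x z), B (e z).succ (x (e z))⟫_ℂ := by
  set σ := Equiv.Perm.decomposeFin.symm (p'.succ, e) with hσ
  set z₀ : Fin n := e⁻¹ p' with hz₀
  have hez₀ : e z₀ = p' := Equiv.apply_symm_apply e p'
  -- rewrite each summand
  have hsummand : ∀ j : Fin 3,
      (∏ y : Fin (n + 1),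
        ⟪B y ((Fin.cases j x : ∀ _ : Fin (n+1), Fin 3) y),
          B (σ y) ((Fin.cases j x : ∀ _ : Fin (n+1), Fin 3) (σ y))⟫_ℂ)
      = (⟪B z₀.succ (x z₀), B 0 j⟫_ℂ * ⟪B 0 j, B (p'.succ) (x p')⟫_ℂ) *
          ∏ z ∈ Finset.univ.erase z₀, ⟪B z.succ (x z), B (e z).succ (x (e z))⟫_ℂ := by
    intro j
    rw [Fin.prod_univ_succ]
    have h0 : σ 0 = p'.succ := Equiv.Perm.decomposeFin_symm_apply_zero _ _
    have hfac : ∀ z : Fin n,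
        ⟪B z.succ ((Fin.cases j x : ∀ _ : Fin (n+1), Fin 3) z.succ),
          B (σ z.succ) ((Fin.cases j x : ∀ _ : Fin (n+1), Fin 3) (σ z.succ))⟫_ℂ
        = if z = z₀ then ⟪B z.succ (x z), B 0 j⟫_ℂ
            else ⟪B z.succ (x z), B (e z).succ (x (e z))⟫_ℂ := by
      intro z
      have hs : σ z.succ = Equiv.swap 0 p'.succ (e z).succ :=
        Equiv.Perm.decomposeFin_symm_apply_succ _ _ _
      by_cases hz : z = z₀
      · subst hz
        rw [hs, hez₀, Equiv.swap_apply_right]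
        simp
      · have hez : e z ≠ p' := fun hc => hz (by rw [hz₀, ← hc]; exact (Equiv.symm_apply_apply e z).symm)
        rw [hs, Equiv.swap_apply_of_ne_of_ne (Fin.succ_ne_zero _)
          (fun hc => hez (Fin.succ_injective _ hc))]
        rw [if_neg hz]
        simp
    calc (⟪B 0 ((Fin.cases j x : ∀ _ : Fin (n+1), Fin 3) 0),
          B (σ 0) ((Fin.cases j x : ∀ _ : Fin (n+1), Fin 3) (σ 0))⟫_ℂ) *
        ∏ z : Fin n, ⟪B z.succ ((Fin.cases j x : ∀ _ : Fin (n+1), Fin 3) z.succ),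
          B (σ z.succ) ((Fin.cases j x : ∀ _ : Fin (n+1), Fin 3) (σ z.succ))⟫_ℂ
        = (⟪B 0 j, B p'.succ (x p')⟫_ℂ) *
          ∏ z : Fin n, (if z = z₀ then ⟪B z.succ (x z), B 0 j⟫_ℂ
            else ⟪B z.succ (x z), B (e z).succ (x (e z))⟫_ℂ) := by
          rw [h0, Finset.prod_congr rfl fun z _ => hfac z]
          simp
      _ = (⟪B 0 j, B p'.succ (x p')⟫_ℂ) * (⟪B z₀.succ (x z₀), B 0 j⟫_ℂ *
            ∏ z ∈ Finset.univ.erase z₀, ⟪B z.succ (x z), B (e z).succ (x (e z))⟫_ℂ) := by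
          congr 1
          rw [← Finset.mul_prod_erase Finset.univ _ (Finset.mem_univ z₀)]
          simp only [if_pos rfl]
          congr 1
          exact Finset.prod_congr rfl fun z hz =>
            if_neg (Finset.ne_of_mem_erase hz)
      _ = _ := by ring
  rw [Finset.sum_congr rfl fun j _ => hsummand j, ← Finset.sum_mul,
    OrthonormalBasis.sum_inner_mul_inner (B 0)]
  rw [← Finset.mul_prod_erase Finset.univ _ (Finset.mem_univ z₀), hez₀]

lemma step {n : ℕ} (hn : 3 ≤ n)
    (B : Fin (n + 1) → OrthonormalBasis (Fin 3) ℂ (EuclideanSpace ℂ (Fin 3)))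
    (hB : IsNUB B) : IsNUB (fun y : Fin n => B y.succ) := by
  obtain ⟨m, rfl⟩ : ∃ m, n = m + 1 := ⟨n - 1, by omega⟩
  intro x
  classical
  set F : Fin 3 → Equiv.Perm (Fin (m + 2)) → ℂ := fun j σ =>
    ∏ y : Fin (m + 2),
      ⟪B y ((Fin.cases j x : ∀ _ : Fin (m + 2), Fin 3) y),
        B (σ y) ((Fin.cases j x : ∀ _ : Fin (m + 2), Fin 3) (σ y))⟫_ℂ with hF
  have hext : ∀ j : Fin 3,
      (∑ σ ∈ nCycles (Fin (m + 2)), F j σ)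
        = (Nat.factorial (m + 1) : ℂ) / 3 ^ (m + 1) := by
    intro j
    have := hB (Fin.cases j x)
    simpa [hF] using this
  set t : Finset (Fin (m + 2) × Equiv.Perm (Fin (m + 1))) :=
    (Finset.univ.erase 0) ×ˢ nCycles (Fin (m + 1)) with ht
  have h1 : ∀ j : Fin 3,
      (∑ σ ∈ nCycles (Fin (m + 2)), F j σ)
        = ∑ pe ∈ t, F j (Equiv.Perm.decomposeFin.symm pe) := by
    intro j
    refine Finset.sum_equiv Equiv.Perm.decomposeFin ?_ ?_
    · intro σ
      conv_lhs => rw [← Equiv.symm_apply_apply Equiv.Perm.decomposeFin σ]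
      obtain ⟨p, e⟩ := Equiv.Perm.decomposeFin σ
      rw [insert_mem (by omega), ht, Finset.mem_product, Finset.mem_erase]
      simp
    · intro σ _
      rw [Equiv.symm_apply_apply]
  set R : ℂ := ∑ e ∈ nCycles (Fin (m + 1)),
    ∏ z : Fin (m + 1), ⟪B z.succ (x z), B (e z).succ (x (e z))⟫_ℂ with hR
  have key : ∀ p : Fin (m + 2), p ≠ 0 →
      ∑ e ∈ nCycles (Fin (m + 1)), ∑ j : Fin 3,
        F j (Equiv.Perm.decomposeFin.symm (p, e)) = R := by
    intro p hp
    obtain ⟨p', rfl⟩ := Fin.exists_succ_eq.2 hp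
    refine Finset.sum_congr rfl fun e _ => ?_
    exact collapse B x p' e
  have htot : ∑ pe ∈ t, ∑ j : Fin 3, F j (Equiv.Perm.decomposeFin.symm pe)
      = 3 * ((Nat.factorial (m + 1) : ℂ) / 3 ^ (m + 1)) := by
    rw [Finset.sum_comm]
    rw [Finset.sum_congr rfl fun j _ => (h1 j).symm]
    rw [Finset.sum_congr rfl fun j _ => hext j]
    simp
  rw [ht, Finset.sum_product] at htot
  rw [Finset.sum_congr rfl fun p hp => key p (Finset.ne_of_mem_erase hp)] at htot
  rw [Finset.sum_const, Finset.card_erase_of_mem (Finset.mem_univ _)] at htot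
  simp only [Finset.card_univ, Fintype.card_fin, nsmul_eq_mul] at htot
  have hgoal : R = (Nat.factorial m : ℂ) / 3 ^ m := by
    have h3 : (3 : ℂ) ≠ 0 := by norm_num
    have hm1 : ((m : ℂ) + 1) ≠ 0 := Nat.cast_add_one_ne_zero m
    have hcast : ((m + 2 - 1 : ℕ) : ℂ) = (m : ℂ) + 1 := by push_cast; ring
    rw [hcast] at htot
    have hfac : (Nat.factorial (m + 1) : ℂ) = ((m : ℂ) + 1) * (Nat.factorial m : ℂ) := by
      push_cast [Nat.factorial_succ]; ring
    rw [hfac] at htot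
    refine mul_left_cancel₀ hm1 ?_
    rw [htot, pow_succ]
    field_simp
  show (∑ σ ∈ nCycles (Fin (m + 1)), ∏ z : Fin (m + 1),
      ⟪B z.succ (x z), B (σ z).succ (x (σ z))⟫_ℂ) = _
  rw [← hR, hgoal]
  simp


lemma nCycles_fin_two : nCycles (Fin 2) = {Equiv.swap 0 1} := by
  ext e
  rw [mem_nCycles, Finset.mem_singleton]
  constructor
  · rintro ⟨hc, hs⟩
    rcases (by decide : ∀ e : Equiv.Perm (Fin 2), e = 1 ∨ e = Equiv.swap 0 1) e with h | h
    · rw [h] at hs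
      exact absurd hs (by decide)
    · exact h
  · rintro rfl
    refine ⟨Equiv.Perm.isCycle_swap (by decide), ?_⟩
    rw [support_eq_univ_iff]
    decide

lemma nCycles_fin_three : nCycles (Fin 3) =
    {Equiv.Perm.decomposeFin.symm ((1 : Fin 2).succ, Equiv.swap 0 1),
      Equiv.Perm.decomposeFin.symm ((0 : Fin 2).succ, Equiv.swap 0 1)} := by
  ext σ
  obtain ⟨⟨p, e⟩, rfl⟩ : ∃ pe, σ = Equiv.Perm.decomposeFin.symm pe :=
    ⟨Equiv.Perm.decomposeFin σ, (Equiv.symm_apply_apply _ σ).symm⟩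
  rw [insert_mem le_rfl, nCycles_fin_two]
  simp only [Finset.mem_singleton, Finset.mem_insert, EmbeddingLike.apply_eq_iff_eq,
    Prod.mk.injEq]
  have hp3 : ∀ q : Fin 3, q ≠ 0 ↔ (q = (1 : Fin 2).succ ∨ q = (0 : Fin 2).succ) := by decide
  constructor
  · rintro ⟨hp, rfl⟩
    rcases (hp3 p).1 hp with h | h
    · exact Or.inl ⟨h, rfl⟩
    · exact Or.inr ⟨h, rfl⟩
  · rintro (⟨rfl, rfl⟩ | ⟨rfl, rfl⟩) <;> exact ⟨by decide, rfl⟩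

lemma base (B : Fin 3 → OrthonormalBasis (Fin 3) ℂ (EuclideanSpace ℂ (Fin 3))) :
    ¬ IsNUB B := by
  intro H
  set c1 : Equiv.Perm (Fin 3) := Equiv.Perm.decomposeFin.symm ((1 : Fin 2).succ, Equiv.swap 0 1)
    with hc1
  set c2 : Equiv.Perm (Fin 3) := Equiv.Perm.decomposeFin.symm ((0 : Fin 2).succ, Equiv.swap 0 1)
    with hc2
  have hc1v : c1 0 = 2 ∧ c1 1 = 0 ∧ c1 2 = 1 := by rw [hc1]; refine ⟨?_, ?_, ?_⟩ <;> decide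
  have hc2v : c2 0 = 1 ∧ c2 1 = 2 ∧ c2 2 = 0 := by rw [hc2]; refine ⟨?_, ?_, ?_⟩ <;> decide
  have hne : c1 ≠ c2 := by rw [hc1, hc2]; decide
  set T : Fin 3 → Fin 3 → Fin 3 → ℂ := fun a b c =>
    ⟪B 0 a, B 1 b⟫_ℂ * ⟪B 1 b, B 2 c⟫_ℂ * ⟪B 2 c, B 0 a⟫_ℂ with hT
  have key : ∀ a b c : Fin 3,
      (starRingEnd ℂ) (T a b c) + T a b c = 2 / 9 := by
    intro a b c
    have h := H ![a, b, c]
    rw [nCycles_fin_three, ← hc1, ← hc2] at h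
    rw [Finset.sum_insert (by simpa using hne), Finset.sum_singleton] at h
    rw [Fin.prod_univ_three, Fin.prod_univ_three] at h
    rw [hc1v.1, hc1v.2.1, hc1v.2.2, hc2v.1, hc2v.2.1, hc2v.2.2] at h
    simp only [Matrix.cons_val_zero, Matrix.cons_val_one, Matrix.head_cons,
      Matrix.cons_val_two, Matrix.tail_cons] at h
    have hrhs : (((Fintype.card (Fin 3) - 1).factorial : ℕ) : ℂ) /
        ((3 : ℕ) : ℂ) ^ (Fintype.card (Fin 3) - 1) = 2 / 9 := by
      norm_num [Fintype.card_fin]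
    rw [hrhs] at h
    rw [hT]
    simp only []
    rw [← h]
    have e1 : (starRingEnd ℂ) (⟪B 0 a, B 1 b⟫_ℂ * ⟪B 1 b, B 2 c⟫_ℂ * ⟪B 2 c, B 0 a⟫_ℂ)
        = ⟪B 1 b, B 0 a⟫_ℂ * ⟪B 2 c, B 1 b⟫_ℂ * ⟪B 0 a, B 2 c⟫_ℂ := by
      rw [map_mul, map_mul, inner_conj_symm, inner_conj_symm, inner_conj_symm]
    rw [e1]
    ring
  -- resolution-of-identity sums
  have S1 : ∀ a b : Fin 3, ∑ c : Fin 3, T a b c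
      = ⟪B 0 a, B 1 b⟫_ℂ * ⟪B 1 b, B 0 a⟫_ℂ := by
    intro a b
    have : ∀ c : Fin 3, T a b c
        = ⟪B 0 a, B 1 b⟫_ℂ * (⟪B 1 b, B 2 c⟫_ℂ * ⟪B 2 c, B 0 a⟫_ℂ) := by
      intro c; rw [hT]; ring
    rw [Finset.sum_congr rfl fun c _ => this c, ← Finset.mul_sum,
      OrthonormalBasis.sum_inner_mul_inner (B 2)]
  have S2 : ∀ b c : Fin 3, ∑ a : Fin 3, T a b c
      = ⟪B 1 b, B 2 c⟫_ℂ * ⟪B 2 c, B 1 b⟫_ℂ := by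
    intro b c
    have : ∀ a : Fin 3, T a b c
        = ⟪B 1 b, B 2 c⟫_ℂ * (⟪B 2 c, B 0 a⟫_ℂ * ⟪B 0 a, B 1 b⟫_ℂ) := by
      intro a; rw [hT]; ring
    rw [Finset.sum_congr rfl fun a _ => this a, ← Finset.mul_sum,
      OrthonormalBasis.sum_inner_mul_inner (B 0)]
  have S3 : ∀ a c : Fin 3, ∑ b : Fin 3, T a b c
      = ⟪B 0 a, B 2 c⟫_ℂ * ⟪B 2 c, B 0 a⟫_ℂ := by
    intro a c
    have : ∀ b : Fin 3, T a b c
        = (⟪B 0 a, B 1 b⟫_ℂ * ⟪B 1 b, B 2 c⟫_ℂ) * ⟪B 2 c, B 0 a⟫_ℂ := by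
      intro b; rw [hT]
    rw [Finset.sum_congr rfl fun b _ => this b, ← Finset.sum_mul,
      OrthonormalBasis.sum_inner_mul_inner (B 1)]
  -- pairwise unbiasedness
  have sum_key : ∀ (f : Fin 3 → ℂ), (∀ i, (starRingEnd ℂ) (f i) + f i = 2 / 9) →
      (starRingEnd ℂ) (∑ i, f i) + (∑ i, f i) = 2 / 3 := by
    intro f hf
    rw [map_sum, ← Finset.sum_add_distrib, Finset.sum_congr rfl fun i _ => hf i]
    norm_num [Finset.sum_const, Finset.card_univ]
  have F1 : ∀ a b : Fin 3, ⟪B 0 a, B 1 b⟫_ℂ * ⟪B 1 b, B 0 a⟫_ℂ = 1 / 3 := by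
    intro a b
    have h := sum_key (fun c => T a b c) (fun c => key a b c)
    rw [S1 a b] at h
    have hconj : (starRingEnd ℂ) (⟪B 0 a, B 1 b⟫_ℂ * ⟪B 1 b, B 0 a⟫_ℂ)
        = ⟪B 0 a, B 1 b⟫_ℂ * ⟪B 1 b, B 0 a⟫_ℂ := by
      rw [map_mul, inner_conj_symm, inner_conj_symm]; ring
    rw [hconj] at h
    linear_combination h / 2
  have F2 : ∀ b c : Fin 3, ⟪B 1 b, B 2 c⟫_ℂ * ⟪B 2 c, B 1 b⟫_ℂ = 1 / 3 := by
    intro b c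
    have h := sum_key (fun a => T a b c) (fun a => key a b c)
    rw [S2 b c] at h
    have hconj : (starRingEnd ℂ) (⟪B 1 b, B 2 c⟫_ℂ * ⟪B 2 c, B 1 b⟫_ℂ)
        = ⟪B 1 b, B 2 c⟫_ℂ * ⟪B 2 c, B 1 b⟫_ℂ := by
      rw [map_mul, inner_conj_symm, inner_conj_symm]; ring
    rw [hconj] at h
    linear_combination h / 2
  have F3 : ∀ a c : Fin 3, ⟪B 0 a, B 2 c⟫_ℂ * ⟪B 2 c, B 0 a⟫_ℂ = 1 / 3 := by
    intro a c
    have h := sum_key (fun b => T a b c) (fun b => key a b c)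
    rw [S3 a c] at h
    have hconj : (starRingEnd ℂ) (⟪B 0 a, B 2 c⟫_ℂ * ⟪B 2 c, B 0 a⟫_ℂ)
        = ⟪B 0 a, B 2 c⟫_ℂ * ⟪B 2 c, B 0 a⟫_ℂ := by
      rw [map_mul, inner_conj_symm, inner_conj_symm]; ring
    rw [hconj] at h
    linear_combination h / 2
  -- modulus of T
  have hmod : ∀ a b c : Fin 3, T a b c * (starRingEnd ℂ) (T a b c) = 1 / 27 := by
    intro a b c
    have e1 : (starRingEnd ℂ) (T a b c)
        = ⟪B 1 b, B 0 a⟫_ℂ * ⟪B 2 c, B 1 b⟫_ℂ * ⟪B 0 a, B 2 c⟫_ℂ := by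
      rw [hT]
      simp only []
      rw [map_mul, map_mul, inner_conj_symm, inner_conj_symm, inner_conj_symm]
    rw [e1, hT]
    simp only []
    calc ⟪B 0 a, B 1 b⟫_ℂ * ⟪B 1 b, B 2 c⟫_ℂ * ⟪B 2 c, B 0 a⟫_ℂ *
          (⟪B 1 b, B 0 a⟫_ℂ * ⟪B 2 c, B 1 b⟫_ℂ * ⟪B 0 a, B 2 c⟫_ℂ)
        = (⟪B 0 a, B 1 b⟫_ℂ * ⟪B 1 b, B 0 a⟫_ℂ) * ((⟪B 1 b, B 2 c⟫_ℂ * ⟪B 2 c, B 1 b⟫_ℂ) *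
            (⟪B 0 a, B 2 c⟫_ℂ * ⟪B 2 c, B 0 a⟫_ℂ)) := by ring
      _ = 1 / 27 := by rw [F1, F2, F3]; norm_num
  -- real and imaginary parts
  have hre : ∀ c : Fin 3, (T 0 0 c).re = 1 / 9 := by
    intro c
    have h := key 0 0 c
    have := congrArg Complex.re h
    simp only [Complex.add_re, Complex.conj_re] at this
    have h29 : ((2 : ℂ) / 9).re = 2 / 9 := by norm_num
    rw [h29] at this
    linarith
  have hsq : ∀ c : Fin 3, (T 0 0 c).re ^ 2 + (T 0 0 c).im ^ 2 = 1 / 27 := by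
    intro c
    have h := hmod 0 0 c
    rw [Complex.mul_conj] at h
    have : Complex.normSq (T 0 0 c) = 1 / 27 := by
      have h27 : ((1 : ℂ) / 27) = ((1 / 27 : ℝ) : ℂ) := by norm_num
      rw [h27] at h
      exact_mod_cast h
    rw [Complex.normSq_apply] at this
    nlinarith [this]
  have him : (T 0 0 0).im + (T 0 0 1).im + (T 0 0 2).im = 0 := by
    have h := S1 0 0
    rw [F1 0 0] at h
    have := congrArg Complex.im h
    rw [Fin.sum_univ_three] at this
    simp only [Complex.add_im] at this
    have h13 : ((1 : ℂ) / 3).im = 0 := by norm_num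
    rw [h13] at this
    linarith
  -- contradiction
  have hq : ∀ c : Fin 3, (T 0 0 c).im ^ 2 = 2 / 81 := by
    intro c
    have h1 := hre c
    have h2 := hsq c
    nlinarith [h1, h2]
  set q0 := (T 0 0 0).im
  set q1 := (T 0 0 1).im
  set q2 := (T 0 0 2).im
  have e1 := hq 0
  have e2 := hq 1
  have e3 := hq 2
  have hp : q0 * q1 = -1 / 81 := by
    linear_combination (q0 + q1 - q2) / 2 * him - e1 / 2 - e2 / 2 + e3 / 2
  have h4 : q0 ^ 2 * q1 ^ 2 = 4 / 6561 := by rw [e1, e2]; norm_num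
  nlinarith [hp, h4]

/-- There is no `n`-fold unbiased set of orthonormal bases in dimension 3 for any `n ≥ 3`;
in particular no three orthonormal bases of `ℂ³` form a 3UB. -/
theorem stmt_12 (n : ℕ) (hn : 3 ≤ n)
    (B : Fin n → OrthonormalBasis (Fin 3) ℂ (EuclideanSpace ℂ (Fin 3))) :
    ¬ IsNUB B := by
  induction n, hn using Nat.le_induction with
  | base => exact base B
  | succ n hn ih => exact fun h => ih (fun y => B y.succ) (step hn B h)
end

section
/- There do not exist three orthonormal bases of ℂ⁴ forming a 3-fold unbiased set (3UB); consequently there are no n-fold unbiased sets in dimension 4 for any n ≥ 3. -/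
open scoped InnerProductSpace

namespace Stmt13

open Equiv Equiv.Perm Finset

variable {n : ℕ} (B : Fin n → OrthonormalBasis (Fin 4) ℂ (EuclideanSpace ℂ (Fin 4)))

/-- The cyclic weight. -/
noncomputable def W (σ : Equiv.Perm (Fin n)) (x : Fin n → Fin 4) : ℂ :=
  ∏ y, ⟪B y (x y), B (σ y) (x (σ y))⟫_ℂ

variable (a b c : Fin n)

open scoped Classical in
/-- Sum of `W` over all configurations free outside `{a,b,c}` within the support. -/
noncomputable def S (σ : Equiv.Perm (Fin n)) (f : Fin n → Fin 4) : ℂ :=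
  ∑ x ∈ Finset.univ.filter
      (fun x : Fin n → Fin 4 => ∀ y, y ∉ σ.support \ ({a, b, c} : Finset (Fin n)) → x y = f y),
    W B σ x

lemma inner_same (y : Fin n) (v : Fin 4) : ⟪B y v, B y v⟫_ℂ = 1 := by
  have h := orthonormal_iff_ite.mp (B y).orthonormal v v
  simpa using h

lemma two_cycle_aux {σ : Equiv.Perm (Fin n)} (hσ : σ.IsCycle)
    (hab : a ≠ b) (hac : a ≠ c) (hbc : b ≠ c)
    (ha : a ∈ σ.support) (hb : b ∈ σ.support) (hc : c ∈ σ.support)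
    {p : Fin n} (hp : p ∈ σ.support) : σ (σ p) ≠ p := by
  intro h
  have key : ∀ i : ℕ, (σ ^ i) p = p ∨ (σ ^ i) p = σ p := by
    intro i; induction i with
    | zero => left; rfl
    | succ i ih =>
      rw [pow_succ', Equiv.Perm.mul_apply]
      rcases ih with h1 | h1 <;> rw [h1]
      · right; rfl
      · left; exact h
  have mem : ∀ y ∈ σ.support, y = p ∨ y = σ p := by
    intro y hy
    obtain ⟨i, hi⟩ := hσ.exists_pow_eq (Equiv.Perm.mem_support.1 hp) (Equiv.Perm.mem_support.1 hy)
    rcases key i with h1 | h1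
    · left; rw [← hi, h1]
    · right; rw [← hi, h1]
  rcases mem a ha with h1 | h1 <;> rcases mem b hb with h2 | h2 <;>
    rcases mem c hc with h3 | h3 <;> simp_all

lemma support_splice {σ : Equiv.Perm (Fin n)} {p : Fin n} (hp : σ p ≠ p)
    (hp2 : σ (σ p) ≠ p) :
    (Equiv.swap p (σ p) * σ).support = σ.support.erase p := by
  ext y
  simp only [Equiv.Perm.mem_support, Finset.mem_erase, Equiv.Perm.mul_apply]
  by_cases h1 : y = p
  · subst h1; simp [Equiv.swap_apply_right]
  · by_cases h2 : σ y = p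
    · rw [h2, Equiv.swap_apply_left]
      exact iff_of_true (fun hh => hp2 (by rw [hh, h2])) ⟨h1, Ne.symm h1⟩
    · rw [Equiv.swap_apply_of_ne_of_ne h2 (fun hh => h1 (σ.injective hh))]
      constructor
      · intro h; exact ⟨h1, h⟩
      · intro h; exact h.2

lemma sum_update {σ : Equiv.Perm (Fin n)} {p : Fin n} (hp : p ∈ σ.support)
    (hsq : σ (σ p) ≠ p) (x : Fin n → Fin 4) :
    ∑ m : Fin 4, W B σ (Function.update x p m) = W B (Equiv.swap p (σ p) * σ) x := by
  classical
  have hσp : σ p ≠ p := Equiv.Perm.mem_support.1 hp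
  set q := σ⁻¹ p with hqdef
  have hσq : σ q = p := σ.apply_symm_apply p
  have hqp : q ≠ p := fun h => hσp (h ▸ hσq)
  have hpq : p ≠ q := Ne.symm hqp
  have split : ∀ (τ : Equiv.Perm (Fin n)) (z : Fin n → Fin 4),
      W B τ z = (⟪B q (z q), B (τ q) (z (τ q))⟫_ℂ) *
        ((⟪B p (z p), B (τ p) (z (τ p))⟫_ℂ) *
          ∏ y ∈ (Finset.univ.erase q).erase p, ⟪B y (z y), B (τ y) (z (τ y))⟫_ℂ) := by
    intro τ z
    rw [W, ← Finset.mul_prod_erase Finset.univ _ (Finset.mem_univ q),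
        ← Finset.mul_prod_erase _ _ (Finset.mem_erase.2 ⟨hpq, Finset.mem_univ p⟩)]
  have hrest : ∀ m : Fin 4,
      (∏ y ∈ (Finset.univ.erase q).erase p,
        ⟪B y (Function.update x p m y), B (σ y) (Function.update x p m (σ y))⟫_ℂ)
      = ∏ y ∈ (Finset.univ.erase q).erase p,
          ⟪B y (x y), B ((Equiv.swap p (σ p) * σ) y) (x ((Equiv.swap p (σ p) * σ) y))⟫_ℂ := by
    intro m
    apply Finset.prod_congr rfl
    intro y hy
    obtain ⟨hyp, hyq, -⟩ : y ≠ p ∧ y ≠ q ∧ y ∈ Finset.univ := by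
      simpa [Finset.mem_erase, and_assoc] using hy
    have h1 : σ y ≠ p := fun h => hyq (by rw [hqdef, ← h, Equiv.Perm.inv_def, Equiv.symm_apply_apply])
    have h2 : σ y ≠ σ p := fun h => hyp (σ.injective h)
    rw [Equiv.Perm.mul_apply, Equiv.swap_apply_of_ne_of_ne h1 h2,
      Function.update_of_ne hyp, Function.update_of_ne h1]
  have e1 : (Equiv.swap p (σ p) * σ) q = σ p := by
    rw [Equiv.Perm.mul_apply, hσq, Equiv.swap_apply_left]
  have e2 : (Equiv.swap p (σ p) * σ) p = p := by
    rw [Equiv.Perm.mul_apply, Equiv.swap_apply_right]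
  have hterm : ∀ m : Fin 4, W B σ (Function.update x p m)
      = (⟪B q (x q), B p m⟫_ℂ * ⟪B p m, B (σ p) (x (σ p))⟫_ℂ) *
        ∏ y ∈ (Finset.univ.erase q).erase p,
          ⟪B y (x y), B ((Equiv.swap p (σ p) * σ) y) (x ((Equiv.swap p (σ p) * σ) y))⟫_ℂ := by
    intro m
    rw [split σ, hrest m, hσq, Function.update_of_ne hqp, Function.update_self,
      Function.update_of_ne hσp]
    ring
  rw [split (Equiv.swap p (σ p) * σ) x, e1, e2, inner_same]
  simp only [hterm]
  rw [← Finset.sum_mul, (B p).sum_inner_mul_inner]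
  ring

lemma splice {σ : Equiv.Perm (Fin n)} {p : Fin n} (hp : p ∈ σ.support)
    (hpa : p ∉ ({a, b, c} : Finset (Fin n))) (hsq : σ (σ p) ≠ p) (f : Fin n → Fin 4) :
    S B a b c σ f = S B a b c (Equiv.swap p (σ p) * σ) f := by
  classical
  have hsupp : (Equiv.swap p (σ p) * σ).support = σ.support.erase p :=
    support_splice (Equiv.Perm.mem_support.1 hp) hsq
  have hD : (Equiv.swap p (σ p) * σ).support \ ({a, b, c} : Finset (Fin n))
      = (σ.support \ ({a, b, c} : Finset (Fin n))).erase p := by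
    rw [hsupp]; ext y
    simp only [Finset.mem_sdiff, Finset.mem_erase]
    tauto
  have hpD : p ∈ σ.support \ ({a, b, c} : Finset (Fin n)) := Finset.mem_sdiff.2 ⟨hp, hpa⟩
  rw [S, S, hD]
  set D := σ.support \ ({a, b, c} : Finset (Fin n)) with hDdef
  have step1 : (∑ x ∈ Finset.univ.filter
        (fun x : Fin n → Fin 4 => ∀ y, y ∉ D → x y = f y), W B σ x)
      = ∑ z ∈ (Finset.univ.filter
          (fun x : Fin n → Fin 4 => ∀ y, y ∉ D.erase p → x y = f y)) ×ˢ
            (Finset.univ : Finset (Fin 4)),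
          W B σ (Function.update z.1 p z.2) := by
    refine Finset.sum_bij' (fun x _ => (Function.update x p (f p), x p))
      (fun z _ => Function.update z.1 p z.2) ?_ ?_ ?_ ?_ ?_
    · intro x hx
      rw [Finset.mem_filter] at hx
      rw [Finset.mem_product, Finset.mem_filter]
      refine ⟨⟨Finset.mem_univ _, fun y hy => ?_⟩, Finset.mem_univ _⟩
      show Function.update x p (f p) y = f y
      by_cases hyp : y = p
      · subst hyp; rw [Function.update_self]
      · rw [Function.update_of_ne hyp]
        exact hx.2 y (fun hmem => hy (Finset.mem_erase.2 ⟨hyp, hmem⟩))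
    · intro z hz
      rw [Finset.mem_product, Finset.mem_filter] at hz
      rw [Finset.mem_filter]
      refine ⟨Finset.mem_univ _, fun y hy => ?_⟩
      have hyp : y ≠ p := fun h => hy (h ▸ hpD)
      show Function.update z.1 p z.2 y = f y
      rw [Function.update_of_ne hyp]
      exact hz.1.2 y (fun hmem => hy (Finset.mem_erase.1 hmem).2)
    · intro x hx
      show Function.update (Function.update x p (f p)) p (x p) = x
      rw [Function.update_idem, Function.update_eq_self]
    · intro z hz
      rw [Finset.mem_product, Finset.mem_filter] at hz
      have hzp : z.1 p = f p := hz.1.2 p (Finset.notMem_erase p D)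
      have h1 : Function.update (Function.update z.1 p z.2) p (f p) = z.1 := by
        rw [Function.update_idem, ← hzp, Function.update_eq_self]
      have h2 : Function.update z.1 p z.2 p = z.2 := Function.update_self _ _ _
      show (Function.update (Function.update z.1 p z.2) p (f p),
              Function.update z.1 p z.2 p) = z
      rw [h1, h2]
    · intro x hx
      show W B σ x = W B σ (Function.update (Function.update x p (f p)) p (x p))
      rw [Function.update_idem, Function.update_eq_self]
  rw [step1, Finset.sum_product]
  apply Finset.sum_congr rfl
  intro x hx
  exact sum_update B hp hsq x

/-- Triple product in one cyclic order. -/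
noncomputable def P3 (i j k : Fin 4) : ℂ :=
  ⟪B a i, B b j⟫_ℂ * (⟪B b j, B c k⟫_ℂ * ⟪B c k, B a i⟫_ℂ)

/-- Triple product in the other cyclic order. -/
noncomputable def Q3 (i j k : Fin 4) : ℂ :=
  ⟪B a i, B c k⟫_ℂ * (⟪B c k, B b j⟫_ℂ * ⟪B b j, B a i⟫_ℂ)

lemma collapse (hab : a ≠ b) (hac : a ≠ c) (hbc : b ≠ c) (f : Fin n → Fin 4) :
    ∀ N (σ : Equiv.Perm (Fin n)), σ.support.card ≤ N → σ.IsCycle →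
    a ∈ σ.support → b ∈ σ.support → c ∈ σ.support →
    S B a b c σ f = P3 B a b c (f a) (f b) (f c) ∨
      S B a b c σ f = Q3 B a b c (f a) (f b) (f c) := by
  intro N
  induction N with
  | zero =>
    intro σ hcard _ ha _ _
    exact absurd (Finset.card_pos.2 ⟨a, ha⟩) (by omega)
  | succ N ih =>
    intro σ hcard hσ ha hb hc
    by_cases hfree : (σ.support \ ({a, b, c} : Finset (Fin n))).Nonempty
    · obtain ⟨p, hp⟩ := hfree
      obtain ⟨hps, hpabc⟩ := Finset.mem_sdiff.1 hp
      have hpa : p ≠ a := fun h => hpabc (by simp [h])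
      have hpb : p ≠ b := fun h => hpabc (by simp [h])
      have hpc : p ≠ c := fun h => hpabc (by simp [h])
      have hsq := two_cycle_aux a b c hσ hab hac hbc ha hb hc hps
      rw [splice B a b c hps hpabc hsq f]
      have hsupp := support_splice (Equiv.Perm.mem_support.1 hps) hsq
      apply ih
      · rw [hsupp, Finset.card_erase_of_mem hps]; omega
      · exact hσ.swap_mul (Equiv.Perm.mem_support.1 hps) hsq
      · rw [hsupp]; exact Finset.mem_erase.2 ⟨Ne.symm hpa, ha⟩
      · rw [hsupp]; exact Finset.mem_erase.2 ⟨Ne.symm hpb, hb⟩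
      · rw [hsupp]; exact Finset.mem_erase.2 ⟨Ne.symm hpc, hc⟩
    · have hsub : σ.support = ({a, b, c} : Finset (Fin n)) := by
        apply Finset.Subset.antisymm
        · intro y hy
          by_contra hy2
          exact hfree ⟨y, Finset.mem_sdiff.2 ⟨hy, hy2⟩⟩
        · intro y hy
          simp only [Finset.mem_insert, Finset.mem_singleton] at hy
          rcases hy with rfl | rfl | rfl <;> assumption
      have hfs : S B a b c σ f = W B σ f := by
        rw [S]
        have hset : (Finset.univ.filter
            (fun x : Fin n → Fin 4 =>
              ∀ y, y ∉ σ.support \ ({a, b, c} : Finset (Fin n)) → x y = f y)) = {f} := by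
          ext x
          simp only [Finset.mem_filter, Finset.mem_univ, true_and, Finset.mem_singleton,
            hsub, Finset.sdiff_self, Finset.notMem_empty, not_false_iff, forall_true_left]
          constructor
          · intro h; funext y; exact h y
          · intro h y; rw [h]
        rw [hset, Finset.sum_singleton]
      have hprod : ∀ (τ : Equiv.Perm (Fin n)), τ.support = ({a, b, c} : Finset (Fin n)) →
          W B τ f = ⟪B a (f a), B (τ a) (f (τ a))⟫_ℂ *
            (⟪B b (f b), B (τ b) (f (τ b))⟫_ℂ * ⟪B c (f c), B (τ c) (f (τ c))⟫_ℂ) := by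
        intro τ hτ
        have hone : ∀ y ∈ (Finset.univ : Finset (Fin n)),
            y ∉ ({a, b, c} : Finset (Fin n)) →
            ⟪B y (f y), B (τ y) (f (τ y))⟫_ℂ = 1 := by
          intro y _ hy
          have hyn : y ∉ τ.support := by rw [hτ]; exact hy
          rw [Equiv.Perm.notMem_support.1 hyn]
          exact inner_same B y (f y)
        rw [W, ← Finset.prod_subset (Finset.subset_univ _) hone,
          Finset.prod_insert (by simp [hab, hac]),
          Finset.prod_insert (by simp [hbc]), Finset.prod_singleton]
      have hmm : ∀ y, y ∈ σ.support → (σ y = a ∨ σ y = b ∨ σ y = c) := by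
        intro y hy
        have hmem : σ y ∈ σ.support := Equiv.Perm.apply_mem_support.2 hy
        rw [hsub] at hmem
        simpa using hmem
      have hna : σ a ≠ a := Equiv.Perm.mem_support.1 ha
      have hnb : σ b ≠ b := Equiv.Perm.mem_support.1 hb
      have hnc : σ c ≠ c := Equiv.Perm.mem_support.1 hc
      rcases hmm a ha with h1 | h1 | h1
      · exact absurd h1 hna
      · -- σ a = b ⇒ σ b = c, σ c = a
        have h2 : σ b = c := by
          rcases hmm b hb with h | h | h
          · exfalso
            rcases hmm c hc with h' | h' | h'
            · exact hbc (σ.injective (h.trans h'.symm))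
            · exact hac (σ.injective (h1.trans h'.symm))
            · exact hnc h'
          · exact absurd h hnb
          · exact h
        have h3 : σ c = a := by
          rcases hmm c hc with h | h | h
          · exact h
          · exact absurd (σ.injective (h1.trans h.symm)) hac
          · exact absurd h hnc
        left
        rw [hfs, hprod σ hsub, h1, h2, h3, P3]
      · -- σ a = c ⇒ σ c = b, σ b = a
        have h2 : σ c = b := by
          rcases hmm c hc with h | h | h
          · exfalso
            rcases hmm b hb with h' | h' | h'
            · exact hbc (σ.injective (h'.trans h.symm))
            · exact hnb h'
            · exact hab (σ.injective (h1.trans h'.symm))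
          · exact h
          · exact absurd h hnc
        have h3 : σ b = a := by
          rcases hmm b hb with h | h | h
          · exact h
          · exact absurd h hnb
          · exact absurd (σ.injective (h1.trans h.symm)) hab
        right
        rw [hfs, hprod σ hsub, h1, h2, h3, Q3]
        ring

lemma conj_P3 (i j k : Fin 4) :
    (starRingEnd ℂ) (P3 B a b c i j k) = Q3 B a b c i j k := by
  rw [P3, Q3]
  simp only [map_mul, inner_conj_symm]
  ring

lemma conj_Q3 (i j k : Fin 4) :
    (starRingEnd ℂ) (Q3 B a b c i j k) = P3 B a b c i j k := by
  rw [← conj_P3, Complex.conj_conj]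

lemma sum_S (hB : IsNUB B) (f : Fin n → Fin 4) :
    ∑ σ ∈ nCycles (Fin n), S B a b c σ f
      = ((∏ y : Fin n, if y ∈ ({a, b, c} : Finset (Fin n)) then 1 else 4 : ℕ) : ℂ) *
        (((Fintype.card (Fin n) - 1).factorial : ℂ) /
          ((4 : ℕ) : ℂ) ^ (Fintype.card (Fin n) - 1)) := by
  classical
  set F := Finset.univ.filter
    (fun x : Fin n → Fin 4 =>
      ∀ y, y ∉ (Finset.univ \ ({a, b, c} : Finset (Fin n))) → x y = f y) with hF
  have hstep : ∀ σ ∈ nCycles (Fin n), S B a b c σ f = ∑ x ∈ F, W B σ x := by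
    intro σ hσ
    rw [nCycles, Finset.mem_filter] at hσ
    rw [S, hσ.2.2]
  rw [Finset.sum_congr rfl hstep, Finset.sum_comm]
  have hinner : ∀ x ∈ F, ∑ σ ∈ nCycles (Fin n), W B σ x
      = ((Fintype.card (Fin n) - 1).factorial : ℂ) /
          ((4 : ℕ) : ℂ) ^ (Fintype.card (Fin n) - 1) := by
    intro x _
    simpa only [W] using hB x
  rw [Finset.sum_congr rfl hinner, Finset.sum_const, nsmul_eq_mul]
  congr 1
  have hFpi : F = Fintype.piFinset
      (fun y => if y ∈ ({a, b, c} : Finset (Fin n)) then {f y}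
        else (Finset.univ : Finset (Fin 4))) := by
    ext x
    rw [hF]
    simp only [Finset.mem_filter, Finset.mem_univ, true_and, Fintype.mem_piFinset]
    constructor
    · intro h y
      by_cases hy : y ∈ ({a, b, c} : Finset (Fin n))
      · rw [if_pos hy, Finset.mem_singleton]
        exact h y (fun hmem => (Finset.mem_sdiff.1 hmem).2 hy)
      · rw [if_neg hy]; exact Finset.mem_univ _
    · intro h y hy
      have hy' : y ∈ ({a, b, c} : Finset (Fin n)) := by
        by_contra hcon
        exact hy (Finset.mem_sdiff.2 ⟨Finset.mem_univ _, hcon⟩)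
      have hx := h y
      rw [if_pos hy', Finset.mem_singleton] at hx
      exact hx
  rw [hFpi, Fintype.card_piFinset, Nat.cast_inj]
  apply Finset.prod_congr rfl
  intro y _
  split_ifs
  · exact Finset.card_singleton _
  · simp

lemma PQ_const (hB : IsNUB B) (hab : a ≠ b) (hac : a ≠ c) (hbc : b ≠ c)
    (i j k i' j' k' : Fin 4) :
    P3 B a b c i j k + Q3 B a b c i j k = P3 B a b c i' j' k' + Q3 B a b c i' j' k' := by
  classical
  set cF : ℕ := ∏ y : Fin n, if y ∈ ({a, b, c} : Finset (Fin n)) then 1 else 4 with hcF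
  set R0 : ℂ := ((Fintype.card (Fin n) - 1).factorial : ℂ) /
      ((4 : ℕ) : ℂ) ^ (Fintype.card (Fin n) - 1) with hR0
  have hcF0 : cF ≠ 0 := by
    rw [hcF]
    apply Finset.prod_ne_zero_iff.2
    intro y _
    split_ifs <;> norm_num
  have hR00 : R0 ≠ 0 := by
    rw [hR0]
    apply div_ne_zero
    · exact_mod_cast Nat.cast_ne_zero.2 (Nat.factorial_ne_zero _)
    · apply pow_ne_zero; norm_num
  have hRHS0 : 2 * ((cF : ℂ) * R0) ≠ 0 := by
    apply mul_ne_zero two_ne_zero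
    exact mul_ne_zero (Nat.cast_ne_zero.2 hcF0) hR00
  have key : ∀ i j k : Fin 4,
      ((nCycles (Fin n)).card : ℂ) * (P3 B a b c i j k + Q3 B a b c i j k)
        = 2 * ((cF : ℂ) * R0) := by
    intro i j k
    set f : Fin n → Fin 4 := fun y => if y = a then i else if y = b then j else k with hf
    have hfa : f a = i := by rw [hf]; simp
    have hfb : f b = j := by
      rw [hf]; simp [Ne.symm hab]
    have hfc : f c = k := by
      rw [hf]; simp [Ne.symm hac, Ne.symm hbc]
    have hPQ : ∀ σ ∈ nCycles (Fin n),
        S B a b c σ f + (starRingEnd ℂ) (S B a b c σ f)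
          = P3 B a b c i j k + Q3 B a b c i j k := by
      intro σ hσ
      rw [nCycles, Finset.mem_filter] at hσ
      have ha : a ∈ σ.support := by rw [hσ.2.2]; exact Finset.mem_univ a
      have hb : b ∈ σ.support := by rw [hσ.2.2]; exact Finset.mem_univ b
      have hc : c ∈ σ.support := by rw [hσ.2.2]; exact Finset.mem_univ c
      rcases collapse B a b c hab hac hbc f σ.support.card σ le_rfl hσ.2.1 ha hb hc with
        h | h
      · rw [h, hfa, hfb, hfc, conj_P3]
      · rw [h, hfa, hfb, hfc, conj_Q3]
        ring
    have hsum := sum_S B a b c hB f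
    calc ((nCycles (Fin n)).card : ℂ) * (P3 B a b c i j k + Q3 B a b c i j k)
        = ∑ σ ∈ nCycles (Fin n), (P3 B a b c i j k + Q3 B a b c i j k) := by
          rw [Finset.sum_const, nsmul_eq_mul]
      _ = ∑ σ ∈ nCycles (Fin n),
            (S B a b c σ f + (starRingEnd ℂ) (S B a b c σ f)) :=
          (Finset.sum_congr rfl hPQ).symm
      _ = (∑ σ ∈ nCycles (Fin n), S B a b c σ f)
            + (starRingEnd ℂ) (∑ σ ∈ nCycles (Fin n), S B a b c σ f) := by
          rw [Finset.sum_add_distrib, map_sum]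
      _ = ((cF : ℂ) * R0) + (starRingEnd ℂ) ((cF : ℂ) * R0) := by rw [hsum]
      _ = 2 * ((cF : ℂ) * R0) := by
          rw [map_mul, map_natCast, hR0, map_div₀, map_natCast, map_pow, map_natCast]
          ring
  have hcard0 : ((nCycles (Fin n)).card : ℂ) ≠ 0 := by
    intro h
    apply hRHS0
    rw [← key i j k, h, zero_mul]
  exact mul_left_cancel₀ hcard0 ((key i j k).trans (key i' j' k').symm)

lemma no_nub (hB : IsNUB B) (hab : a ≠ b) (hac : a ≠ c) (hbc : b ≠ c) : False := by
  classical
  set C : ℂ := P3 B a b c 0 0 0 + Q3 B a b c 0 0 0 with hC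
  have hconst : ∀ i j k, P3 B a b c i j k + Q3 B a b c i j k = C :=
    fun i j k => PQ_const B a b c hB hab hac hbc i j k 0 0 0
  have h12 : ∀ i j : Fin 4, ⟪B a i, B b j⟫_ℂ * ⟪B b j, B a i⟫_ℂ = 2 * C := by
    intro i j
    have hP : ∑ k : Fin 4, P3 B a b c i j k = ⟪B a i, B b j⟫_ℂ * ⟪B b j, B a i⟫_ℂ := by
      simp only [P3]
      rw [← Finset.mul_sum, (B c).sum_inner_mul_inner]
    have hQ : ∑ k : Fin 4, Q3 B a b c i j k = ⟪B a i, B b j⟫_ℂ * ⟪B b j, B a i⟫_ℂ := by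
      have hq : ∀ k : Fin 4, Q3 B a b c i j k
          = (⟪B a i, B c k⟫_ℂ * ⟪B c k, B b j⟫_ℂ) * ⟪B b j, B a i⟫_ℂ := by
        intro k; rw [Q3]; ring
      rw [Finset.sum_congr rfl (fun k _ => hq k), ← Finset.sum_mul,
        (B c).sum_inner_mul_inner]
    have hsum : ∑ k : Fin 4, (P3 B a b c i j k + Q3 B a b c i j k) = 4 * C := by
      rw [Finset.sum_congr rfl (fun k _ => hconst i j k), Finset.sum_const,
        Finset.card_univ, Fintype.card_fin, nsmul_eq_mul]
      norm_num
    rw [Finset.sum_add_distrib, hP, hQ] at hsum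
    linear_combination hsum / 2
  have h23 : ∀ j k : Fin 4, ⟪B b j, B c k⟫_ℂ * ⟪B c k, B b j⟫_ℂ = 2 * C := by
    intro j k
    have hP : ∑ i : Fin 4, P3 B a b c i j k = ⟪B c k, B b j⟫_ℂ * ⟪B b j, B c k⟫_ℂ := by
      have hp : ∀ i : Fin 4, P3 B a b c i j k
          = (⟪B c k, B a i⟫_ℂ * ⟪B a i, B b j⟫_ℂ) * ⟪B b j, B c k⟫_ℂ := by
        intro i; rw [P3]; ring
      rw [Finset.sum_congr rfl (fun i _ => hp i), ← Finset.sum_mul,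
        (B a).sum_inner_mul_inner]
    have hQ : ∑ i : Fin 4, Q3 B a b c i j k = ⟪B c k, B b j⟫_ℂ * ⟪B b j, B c k⟫_ℂ := by
      have hq : ∀ i : Fin 4, Q3 B a b c i j k
          = ⟪B c k, B b j⟫_ℂ * (⟪B b j, B a i⟫_ℂ * ⟪B a i, B c k⟫_ℂ) := by
        intro i; rw [Q3]; ring
      rw [Finset.sum_congr rfl (fun i _ => hq i), ← Finset.mul_sum,
        (B a).sum_inner_mul_inner]
    have hsum : ∑ i : Fin 4, (P3 B a b c i j k + Q3 B a b c i j k) = 4 * C := by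
      rw [Finset.sum_congr rfl (fun i _ => hconst i j k), Finset.sum_const,
        Finset.card_univ, Fintype.card_fin, nsmul_eq_mul]
      norm_num
    rw [Finset.sum_add_distrib, hP, hQ] at hsum
    linear_combination hsum / 2
  have h31 : ∀ i k : Fin 4, ⟪B a i, B c k⟫_ℂ * ⟪B c k, B a i⟫_ℂ = 2 * C := by
    intro i k
    have hP : ∑ j : Fin 4, P3 B a b c i j k = ⟪B a i, B c k⟫_ℂ * ⟪B c k, B a i⟫_ℂ := by
      have hp : ∀ j : Fin 4, P3 B a b c i j k
          = (⟪B a i, B b j⟫_ℂ * ⟪B b j, B c k⟫_ℂ) * ⟪B c k, B a i⟫_ℂ := by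
        intro j; rw [P3]; ring
      rw [Finset.sum_congr rfl (fun j _ => hp j), ← Finset.sum_mul,
        (B b).sum_inner_mul_inner]
    have hQ : ∑ j : Fin 4, Q3 B a b c i j k = ⟪B a i, B c k⟫_ℂ * ⟪B c k, B a i⟫_ℂ := by
      have hq : ∀ j : Fin 4, Q3 B a b c i j k
          = ⟪B a i, B c k⟫_ℂ * (⟪B c k, B b j⟫_ℂ * ⟪B b j, B a i⟫_ℂ) := by
        intro j; rw [Q3]
      rw [Finset.sum_congr rfl (fun j _ => hq j), ← Finset.mul_sum,
        (B b).sum_inner_mul_inner]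
    have hsum : ∑ j : Fin 4, (P3 B a b c i j k + Q3 B a b c i j k) = 4 * C := by
      rw [Finset.sum_congr rfl (fun j _ => hconst i j k), Finset.sum_const,
        Finset.card_univ, Fintype.card_fin, nsmul_eq_mul]
      norm_num
    rw [Finset.sum_add_distrib, hP, hQ] at hsum
    linear_combination hsum / 2
  have hC8 : C = 1 / 8 := by
    have hs : ∑ j : Fin 4, ⟪B a 0, B b j⟫_ℂ * ⟪B b j, B a 0⟫_ℂ = 1 := by
      rw [(B b).sum_inner_mul_inner]
      exact inner_same B a 0
    rw [Finset.sum_congr rfl (fun j _ => h12 0 j), Finset.sum_const,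
      Finset.card_univ, Fintype.card_fin, nsmul_eq_mul] at hs
    push_cast at hs
    linear_combination hs / 8
  have h2C : (2 : ℂ) * C = 1 / 4 := by rw [hC8]; norm_num
  -- real and imaginary parts of the triple products
  have hz : ∀ i j : Fin 4, (P3 B a b c i j 0).re = 1 / 16 ∧
      (P3 B a b c i j 0).im * (P3 B a b c i j 0).im = 3 / 256 := by
    intro i j
    have h1 : P3 B a b c i j 0 + (starRingEnd ℂ) (P3 B a b c i j 0) = ((1/8 : ℝ) : ℂ) := by
      rw [conj_P3, hconst i j 0, hC8]
      norm_num
    have h2 : P3 B a b c i j 0 * (starRingEnd ℂ) (P3 B a b c i j 0) = ((1/64 : ℝ) : ℂ) := by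
      rw [conj_P3]
      calc P3 B a b c i j 0 * Q3 B a b c i j 0
          = (⟪B a i, B b j⟫_ℂ * ⟪B b j, B a i⟫_ℂ) *
            ((⟪B b j, B c 0⟫_ℂ * ⟪B c 0, B b j⟫_ℂ) *
              (⟪B a i, B c 0⟫_ℂ * ⟪B c 0, B a i⟫_ℂ)) := by rw [P3, Q3]; ring
        _ = (2 * C) * ((2 * C) * (2 * C)) := by rw [h12 i j, h23 j 0, h31 i 0]
        _ = ((1/64 : ℝ) : ℂ) := by rw [h2C]; norm_num
    have hre : (P3 B a b c i j 0).re = 1 / 16 := by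
      have := congrArg Complex.re h1
      simp only [Complex.add_re, Complex.conj_re, Complex.ofReal_re] at this
      linarith
    refine ⟨hre, ?_⟩
    rw [Complex.mul_conj] at h2
    have hn : Complex.normSq (P3 B a b c i j 0) = 1 / 64 := by exact_mod_cast h2
    rw [Complex.normSq_apply, hre] at hn
    nlinarith
  have hX : ∑ j : Fin 4, P3 B a b c 0 j 0 * (starRingEnd ℂ) (P3 B a b c 1 j 0) = 0 := by
    have hterm : ∀ j : Fin 4, P3 B a b c 0 j 0 * (starRingEnd ℂ) (P3 B a b c 1 j 0)
        = (2 * C * (⟪B c 0, B a 0⟫_ℂ * ⟪B a 1, B c 0⟫_ℂ)) *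
          (⟪B a 0, B b j⟫_ℂ * ⟪B b j, B a 1⟫_ℂ) := by
      intro j
      rw [conj_P3, ← h23 j 0, P3, Q3]
      ring
    rw [Finset.sum_congr rfl (fun j _ => hterm j), ← Finset.mul_sum,
      (B b).sum_inner_mul_inner, (B a).orthonormal.2 (by decide : (0 : Fin 4) ≠ 1),
      mul_zero]
  have hre0 := congrArg Complex.re hX
  rw [Complex.re_sum] at hre0
  have hterm_re : ∀ j : Fin 4,
      (P3 B a b c 0 j 0 * (starRingEnd ℂ) (P3 B a b c 1 j 0)).re
        = 1 / 256 + (P3 B a b c 0 j 0).im * (P3 B a b c 1 j 0).im := by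
    intro j
    have hzw : ∀ z w : ℂ, (z * (starRingEnd ℂ) w).re = z.re * w.re + z.im * w.im := by
      intro z w
      simp [Complex.mul_re]
    rw [hzw, (hz 0 j).1, (hz 1 j).1]
    norm_num
  rw [Finset.sum_congr rfl (fun j _ => hterm_re j)] at hre0
  have hucase : ∀ j : Fin 4,
      (P3 B a b c 0 j 0).im * (P3 B a b c 1 j 0).im = 3 / 256 ∨
      (P3 B a b c 0 j 0).im * (P3 B a b c 1 j 0).im = -(3 / 256) := by
    intro j
    have h1 := (hz 0 j).2
    have h2 := (hz 1 j).2
    set v : ℝ := (P3 B a b c 0 j 0).im * (P3 B a b c 1 j 0).im with hv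
    have hfac : (v - 3 / 256) * (v + 3 / 256) = 0 := by
      have hsq : v * v = (3 / 256) * (3 / 256) := by
        rw [hv]
        nlinarith [h1, h2]
      nlinarith [hsq]
    rcases mul_eq_zero.1 hfac with h | h
    · left; linarith
    · right; linarith
  rw [Fin.sum_univ_four] at hre0
  simp only [Complex.zero_re] at hre0
  rcases hucase 0 with h0 | h0 <;> rcases hucase 1 with h1 | h1 <;>
    rcases hucase 2 with h2 | h2 <;> rcases hucase 3 with h3 | h3 <;>
      rw [h0, h1, h2, h3] at hre0 <;> norm_num at hre0

end Stmt13

/-- There is no `n`-fold unbiased set of orthonormal bases in dimension 4 for any `n ≥ 3`;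
in particular no three orthonormal bases of `ℂ⁴` form a 3UB. -/
theorem stmt_13 (n : ℕ) (hn : 3 ≤ n)
    (B : Fin n → OrthonormalBasis (Fin 4) ℂ (EuclideanSpace ℂ (Fin 4))) :
    ¬ IsNUB B := by
  intro hB
  exact Stmt13.no_nub B ⟨0, by omega⟩ ⟨1, by omega⟩ ⟨2, by omega⟩ hB
    (by simp [Fin.ext_iff]) (by simp [Fin.ext_iff]) (by simp [Fin.ext_iff])
end

section
/- Fix n ≥ 1, k ∈ {1,…,n}, and real numbers c_1,…,c_{k−1},c_{k+1},…,c_n. For t ∈ ℝ let P_t(λ) = λ^n + c_1 λ^{n−1} + ⋯ + c_{k−1} λ^{n−k+1} + t λ^{n−k} + c_{k+1} λ^{n−k−1} + ⋯ + c_n, let D = {t ∈ ℝ : all roots of P_t are real and nonnegative}, and for t ∈ D let Λ(t) be the largest root of P_t. Then Λ is concave on D: for all t_0, t_1 ∈ D and s ∈ [0,1] with s·t_0 + (1−s)·t_1 ∈ D, Λ(s·t_0 + (1−s)·t_1) ≥ s·Λ(t_0) + (1−s)·Λ(t_1). In particular, the largest eigenvalue of a positive semidefinite Hermitian matrix is a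 concave function of each single coefficient of its characteristic polynomial, the other coefficients held fixed. -/
/-- The monic real polynomial `λ^n + c_1 λ^{n−1} + ⋯ + c_n` in which the `k`-th
coefficient `c_k` is replaced by the parameter `t`. -/
noncomputable def Pc (n k : ℕ) (c : ℕ → ℝ) (t : ℝ) : Polynomial ℝ :=
  Polynomial.X ^ n + ∑ i ∈ Finset.Icc 1 n,
    Polynomial.C (if i = k then t else c i) * Polynomial.X ^ (n - i)

/-- The set of parameters `t` for which all roots of `Pc n k c t` are real (the polynomial
of degree `n` has `n` real roots with multiplicity) and nonnegative. -/
def Dset (n k : ℕ) (c : ℕ → ℝ) : Set ℝ :=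
  {t | (Pc n k c t).roots.card = n ∧ ∀ r ∈ (Pc n k c t).roots, 0 ≤ r}

/-- The largest real root of `Pc n k c t`. -/
noncomputable def Lam (n k : ℕ) (c : ℕ → ℝ) (t : ℝ) : ℝ :=
  sSup {r : ℝ | (Pc n k c t).IsRoot r}

open Polynomial in
lemma pc_sum_degree_lt (n : ℕ) (hn : 1 ≤ n) (f : ℕ → ℝ) :
    (∑ i ∈ Finset.Icc 1 n, C (f i) * X ^ (n - i)).degree < (n : WithBot ℕ) := by
  refine lt_of_le_of_lt (degree_sum_le _ _) ?_
  rw [Finset.sup_lt_iff (by exact_mod_cast WithBot.bot_lt_coe n)]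
  intro i hi
  refine lt_of_le_of_lt (degree_C_mul_X_pow_le _ _) ?_
  have h1 : 1 ≤ i := (Finset.mem_Icc.1 hi).1
  exact_mod_cast Nat.sub_lt (by omega) (by omega)

open Polynomial in
lemma pc_monic (n k : ℕ) (c : ℕ → ℝ) (hn : 1 ≤ n) (t : ℝ) : (Pc n k c t).Monic :=
  monic_X_pow_add (pc_sum_degree_lt n hn _)

open Polynomial in
lemma pc_natDegree (n k : ℕ) (c : ℕ → ℝ) (hn : 1 ≤ n) (t : ℝ) :
    (Pc n k c t).natDegree = n := by
  have hdeg : (Pc n k c t).degree = n := by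
    unfold Pc
    rw [degree_add_eq_left_of_degree_lt, degree_X_pow]
    rw [degree_X_pow]
    exact pc_sum_degree_lt n hn _
  exact natDegree_eq_of_degree_eq_some hdeg

open Polynomial in
lemma pc_eval_sub (n k : ℕ) (c : ℕ → ℝ) (hk1 : 1 ≤ k) (hkn : k ≤ n) (t t' x : ℝ) :
    (Pc n k c t).eval x = (Pc n k c t').eval x + (t - t') * x ^ (n - k) := by
  have hmem : k ∈ Finset.Icc 1 n := Finset.mem_Icc.2 ⟨hk1, hkn⟩
  simp only [Pc, eval_add, eval_pow, eval_X, eval_finset_sum, eval_mul, eval_C]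
  rw [← Finset.add_sum_erase _ _ hmem, ← Finset.add_sum_erase _ _ hmem]
  have hE : ∑ i ∈ (Finset.Icc 1 n).erase k, (if i = k then t else c i) * x ^ (n - i)
      = ∑ i ∈ (Finset.Icc 1 n).erase k, (if i = k then t' else c i) * x ^ (n - i) :=
    Finset.sum_congr rfl fun i hi => by simp [Finset.ne_of_mem_erase hi]
  rw [hE, if_pos rfl, if_pos rfl]
  ring

open Polynomial in
lemma lam_spec (n k : ℕ) (c : ℕ → ℝ) (hn : 1 ≤ n) {t : ℝ} (ht : t ∈ Dset n k c) :
    (Lam n k c t) ∈ (Pc n k c t).roots ∧ ∀ r ∈ (Pc n k c t).roots, r ≤ Lam n k c t := by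
  have hP0 : Pc n k c t ≠ 0 := (pc_monic n k c hn t).ne_zero
  have hfin : {r : ℝ | (Pc n k c t).IsRoot r}.Finite := by
    have : {r : ℝ | (Pc n k c t).IsRoot r} = ↑(Pc n k c t).roots.toFinset := by
      ext r; simp [Multiset.mem_toFinset, mem_roots', hP0]
    rw [this]; exact Finset.finite_toSet _
  have hne : {r : ℝ | (Pc n k c t).IsRoot r}.Nonempty := by
    have hcard : 0 < Multiset.card (Pc n k c t).roots := by
      rw [ht.1]; omega
    obtain ⟨r, hr⟩ := Multiset.card_pos_iff_exists_mem.1 hcard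
    exact ⟨r, (mem_roots'.1 hr).2⟩
  constructor
  · have := hne.csSup_mem hfin
    exact mem_roots'.2 ⟨hP0, this⟩
  · intro r hr
    exact le_csSup hfin.bddAbove ((mem_roots'.1 hr).2)

open Polynomial in
lemma pc_eval_eq_prod (n k : ℕ) (c : ℕ → ℝ) (hn : 1 ≤ n) {t : ℝ} (ht : t ∈ Dset n k c)
    (x : ℝ) :
    (Pc n k c t).eval x = ((Pc n k c t).roots.map (fun r => x - r)).prod := by
  conv_lhs => rw [← prod_multiset_X_sub_C_of_monic_of_roots_card_eq (pc_monic n k c hn t)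
    (by rw [pc_natDegree n k c hn]; exact ht.1)]
  rw [eval_multiset_prod, Multiset.map_map]
  simp [Function.comp]

open Polynomial in
lemma pc_eval_pos (n k : ℕ) (c : ℕ → ℝ) (hn : 1 ≤ n) {t : ℝ} (ht : t ∈ Dset n k c)
    {x : ℝ} (hx : Lam n k c t < x) : 0 < (Pc n k c t).eval x := by
  rw [pc_eval_eq_prod n k c hn ht x]
  refine Multiset.prod_pos fun a ha => ?_
  obtain ⟨r, hr, rfl⟩ := Multiset.mem_map.1 ha
  have := (lam_spec n k c hn ht).2 r hr
  linarith

lemma prodIneq (x y : ℝ) (hx : 0 ≤ x) (hxy : x ≤ y) :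
    ∀ (R : Multiset ℝ), (∀ r ∈ R, 0 ≤ r ∧ r ≤ x) → ∀ m, m ≤ Multiset.card R →
      y ^ m * (R.map (fun r => x - r)).prod ≤ x ^ m * (R.map (fun r => y - r)).prod := by
  intro R
  induction R using Multiset.induction_on with
  | empty =>
      intro _ m hm
      simp only [Multiset.card_zero, Nat.le_zero] at hm
      subst hm; simp
  | cons r R ih =>
      intro hmem m hm
      have h0r : 0 ≤ r := (hmem r (Multiset.mem_cons_self r R)).1
      have hrx : r ≤ x := (hmem r (Multiset.mem_cons_self r R)).2
      have hmem' : ∀ a ∈ R, 0 ≤ a ∧ a ≤ x := fun a ha => hmem a (Multiset.mem_cons_of_mem ha)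
      have hy0 : 0 ≤ y := le_trans hx hxy
      have hprodx : 0 ≤ (R.map (fun a => x - a)).prod := by
        refine Multiset.prod_nonneg fun a ha => ?_
        obtain ⟨b, hb, rfl⟩ := Multiset.mem_map.1 ha
        linarith [(hmem' b hb).2]
      rw [Multiset.map_cons, Multiset.map_cons, Multiset.prod_cons, Multiset.prod_cons]
      cases m with
      | zero =>
          simp only [pow_zero, one_mul]
          have hih := ih hmem' 0 (Nat.zero_le _)
          simp only [pow_zero, one_mul] at hih
          exact mul_le_mul (by linarith) hih hprodx (by linarith)
      | succ m =>
          have hm' : m ≤ Multiset.card R := by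
            simp only [Multiset.card_cons] at hm; omega
          have ihm := ih hmem' m hm'
          have h1 : y * (x - r) ≤ x * (y - r) := by nlinarith
          have h2 : 0 ≤ y ^ m * (R.map (fun a => x - a)).prod :=
            mul_nonneg (pow_nonneg hy0 m) hprodx
          have h3 : 0 ≤ x * (y - r) := mul_nonneg hx (by linarith)
          calc y ^ (m + 1) * ((x - r) * (R.map (fun a => x - a)).prod)
              = (y * (x - r)) * (y ^ m * (R.map (fun a => x - a)).prod) := by ring
            _ ≤ (x * (y - r)) * (x ^ m * (R.map (fun a => y - a)).prod) :=
                mul_le_mul h1 ihm h2 h3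
            _ = x ^ (m + 1) * ((y - r) * (R.map (fun a => y - a)).prod) := by ring

open Polynomial in
lemma key (n k : ℕ) (hn : 1 ≤ n) (hk1 : 1 ≤ k) (hkn : k ≤ n) (c : ℕ → ℝ)
    (t₀ : ℝ) (ht₀ : t₀ ∈ Dset n k c) (t₁ : ℝ) (ht₁ : t₁ ∈ Dset n k c)
    (s : ℝ) (hs0 : 0 ≤ s) (hs1 : s ≤ 1)
    (hts : s * t₀ + (1 - s) * t₁ ∈ Dset n k c)
    (hΛ : Lam n k c t₁ ≤ Lam n k c t₀) :
    s * Lam n k c t₀ + (1 - s) * Lam n k c t₁ ≤ Lam n k c (s * t₀ + (1 - s) * t₁) := by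
  set Λ₀ := Lam n k c t₀ with hΛ₀def
  set Λ₁ := Lam n k c t₁ with hΛ₁def
  set ts := s * t₀ + (1 - s) * t₁ with htsdef
  set Λs := Lam n k c ts with hΛsdef
  set l := s * Λ₀ + (1 - s) * Λ₁ with hldef
  have h1s : 0 ≤ 1 - s := by linarith
  have hΛ₀0 : 0 ≤ Λ₀ := ht₀.2 _ (lam_spec n k c hn ht₀).1
  have hΛ₁0 : 0 ≤ Λ₁ := ht₁.2 _ (lam_spec n k c hn ht₁).1
  have hΛs0 : 0 ≤ Λs := hts.2 _ (lam_spec n k c hn hts).1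
  have hl1 : Λ₁ ≤ l := by nlinarith
  have hl0 : l ≤ Λ₀ := by nlinarith
  rcases le_or_gt Λ₀ 0 with hneg | hΛ₀pos
  · -- then l ≤ Λ₀ ≤ 0 ≤ Λs
    linarith
  · have hl0' : 0 ≤ l := le_trans hΛ₁0 hl1
    suffices hev : (Pc n k c ts).eval l ≤ 0 by
      by_contra hcon
      push_neg at hcon
      have := pc_eval_pos n k c hn hts hcon
      linarith
    -- roots of P t₁
    have hΛ₁R : Λ₁ ∈ (Pc n k c t₁).roots := (lam_spec n k c hn ht₁).1
    set R' := (Pc n k c t₁).roots.erase Λ₁ with hR'def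
    have hR : (Pc n k c t₁).roots = Λ₁ ::ₘ R' := (Multiset.cons_erase hΛ₁R).symm
    have hcardR' : Multiset.card R' = n - 1 := by
      rw [hR'def, Multiset.card_erase_of_mem hΛ₁R, ht₁.1]
      rfl
    have hmem' : ∀ r ∈ R', 0 ≤ r ∧ r ≤ l := fun r hr =>
      ⟨ht₁.2 r (Multiset.mem_of_mem_erase hr),
        le_trans ((lam_spec n k c hn ht₁).2 r (Multiset.mem_of_mem_erase hr)) hl1⟩
    have hmle : n - k ≤ Multiset.card R' := by rw [hcardR']; omega
    set A := (R'.map (fun r => l - r)).prod with hAdef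
    set B := (R'.map (fun r => Λ₀ - r)).prod with hBdef
    have hprod : Λ₀ ^ (n - k) * A ≤ l ^ (n - k) * B :=
      prodIneq l Λ₀ hl0' hl0 R' hmem' (n - k) hmle
    have hevl : (Pc n k c t₁).eval l = s * (Λ₀ - Λ₁) * A := by
      rw [pc_eval_eq_prod n k c hn ht₁ l, hR, Multiset.map_cons, Multiset.prod_cons, ← hAdef]
      have : l - Λ₁ = s * (Λ₀ - Λ₁) := by rw [hldef]; ring
      rw [this]
    have hevΛ₀ : (Pc n k c t₁).eval Λ₀ = (Λ₀ - Λ₁) * B := by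
      rw [pc_eval_eq_prod n k c hn ht₁ Λ₀, hR, Multiset.map_cons, Multiset.prod_cons, ← hBdef]
    have hroot₀ : (Pc n k c t₀).eval Λ₀ = 0 :=
      (mem_roots'.1 (lam_spec n k c hn ht₀).1).2
    have ht₁Λ₀ : (Pc n k c t₁).eval Λ₀ = (t₁ - t₀) * Λ₀ ^ (n - k) := by
      rw [pc_eval_sub n k c hk1 hkn t₁ t₀ Λ₀, hroot₀, zero_add]
    have hkey : (Λ₀ - Λ₁) * A ≤ (t₁ - t₀) * l ^ (n - k) := by
      have h2 : Λ₀ ^ (n - k) * ((Λ₀ - Λ₁) * A) ≤ Λ₀ ^ (n - k) * ((t₁ - t₀) * l ^ (n - k)) := by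
        calc Λ₀ ^ (n - k) * ((Λ₀ - Λ₁) * A) = (Λ₀ - Λ₁) * (Λ₀ ^ (n - k) * A) := by ring
          _ ≤ (Λ₀ - Λ₁) * (l ^ (n - k) * B) :=
              mul_le_mul_of_nonneg_left hprod (by linarith)
          _ = l ^ (n - k) * ((Λ₀ - Λ₁) * B) := by ring
          _ = l ^ (n - k) * ((t₁ - t₀) * Λ₀ ^ (n - k)) := by rw [← hevΛ₀, ht₁Λ₀]
          _ = Λ₀ ^ (n - k) * ((t₁ - t₀) * l ^ (n - k)) := by ring
      exact le_of_mul_le_mul_left h2 (pow_pos hΛ₀pos (n - k))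
    have hevts : (Pc n k c ts).eval l
        = (Pc n k c t₁).eval l + (ts - t₁) * l ^ (n - k) :=
      pc_eval_sub n k c hk1 hkn ts t₁ l
    have hts1 : ts - t₁ = s * (t₀ - t₁) := by rw [htsdef]; ring
    rw [hevts, hevl, hts1]
    nlinarith [mul_le_mul_of_nonneg_left hkey hs0]

/-- The largest root of a monic real polynomial with all roots real and nonnegative is a
concave function of any single coefficient of the polynomial, the others held fixed. -/
theorem stmt_17 (n k : ℕ) (hn : 1 ≤ n) (hk1 : 1 ≤ k) (hkn : k ≤ n) (c : ℕ → ℝ) :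
    ∀ t₀ ∈ Dset n k c, ∀ t₁ ∈ Dset n k c, ∀ s : ℝ, 0 ≤ s → s ≤ 1 →
      s * t₀ + (1 - s) * t₁ ∈ Dset n k c →
      s * Lam n k c t₀ + (1 - s) * Lam n k c t₁ ≤ Lam n k c (s * t₀ + (1 - s) * t₁) := by
  intro t₀ ht₀ t₁ ht₁ s hs0 hs1 hts
  rcases le_total (Lam n k c t₁) (Lam n k c t₀) with h | h
  · exact key n k hn hk1 hkn c t₀ ht₀ t₁ ht₁ s hs0 hs1 hts h
  · have he : (1 - s) * t₁ + (1 - (1 - s)) * t₀ = s * t₀ + (1 - s) * t₁ := by ring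
    have := key n k hn hk1 hkn c t₁ ht₁ t₀ ht₀ (1 - s) (by linarith) (by linarith)
      (by rw [he]; exact hts) h
    rw [he] at this
    have hs' : 1 - (1 - s) = s := by ring
    rw [hs'] at this
    linarith
end
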